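/- arXiv:2603.29970 — 6 statements merged into one kernel-verified Lean document; each statement's English description precedes it below -/
import Mathlib

section
/- Assume the abc Conjecture. Then for every real η > 0 there exists a constant C > 0 such that for all real X ≥ 2, the number of pairs (x, u) of integers with x ≥ 1, x > X^(1/11), and 1 ≤ |5·x^22 − u^2| ≤ 4X is at most C · X^(1/5 + η). -/
open Real

/-- The radical of a natural number: the product of its distinct prime factors. -/
def rad (n : ℕ) : ℕ := ∏ p ∈ n.primeFactors, p

/-- The abc Conjecture: for every ε > 0 there is a constant `C > 0` such that for all
nonzero coprime integers `a`, `b`, `c` with `a + b = c` one has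
`|c| ≤ C * rad(abc)^(1+ε)`. -/
def ABCConjecture : Prop :=
  ∀ ε : ℝ, 0 < ε → ∃ C : ℝ, 0 < C ∧ ∀ a b c : ℤ,
    a ≠ 0 → b ≠ 0 → c ≠ 0 → IsCoprime a b → a + b = c →
    ((|c| : ℤ) : ℝ) ≤ C * (rad (a * b * c).natAbs : ℝ) ^ (1 + ε)

lemma rad_dvd_self (n : ℕ) : rad n ∣ n := Nat.prod_primeFactors_dvd n

lemma rad_le_self {n : ℕ} (hn : n ≠ 0) : rad n ≤ n :=
  Nat.le_of_dvd (Nat.pos_of_ne_zero hn) (rad_dvd_self n)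

lemma rad_le_rad_of_subset {m n : ℕ} (h : m.primeFactors ⊆ n.primeFactors) :
    rad m ≤ rad n := by
  refine Finset.prod_le_prod_of_subset_of_one_le' h ?_
  intro p hp _
  exact (Nat.prime_of_mem_primeFactors hp).one_lt.le.trans' (by norm_num)

/-- The integer square root used as a base point for counting. -/
noncomputable def vfun (x : ℤ) : ℤ := ((5 * x ^ 22).toNat.sqrt : ℤ)

set_option maxHeartbeats 1000000 in
theorem abc_implies_E4_bound (habc : ABCConjecture) :
    ∀ η : ℝ, 0 < η → ∃ C : ℝ, 0 < C ∧ ∀ X : ℝ, 2 ≤ X →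
      (Set.ncard {p : ℤ × ℤ | 1 ≤ p.1 ∧ X ^ ((1 : ℝ) / 11) < (p.1 : ℝ) ∧
          1 ≤ |5 * p.1 ^ 22 - p.2 ^ 2| ∧ ((|5 * p.1 ^ 22 - p.2 ^ 2| : ℤ) : ℝ) ≤ 4 * X} : ℝ)
        ≤ C * X ^ ((1 : ℝ) / 5 + η) := by
  intro η hη
  set ε : ℝ := min η (1/6) with hεdef
  have hε : 0 < ε := lt_min hη (by norm_num)
  have hε6 : ε ≤ 1/6 := min_le_right _ _
  have hεη : ε ≤ η := min_le_left _ _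
  clear_value ε
  obtain ⟨C₀, hC₀, habc'⟩ := habc ε hε
  set K : ℝ := 4 * C₀ * (60 : ℝ) ^ (1 + ε) with hKdef
  have hKpos : 0 < K := by positivity
  set K' : ℝ := max K 1 with hK'def
  have hK'1 : 1 ≤ K' := le_max_right _ _
  have hK'pos : 0 < K' := lt_of_lt_of_le one_pos hK'1
  clear_value K K'
  refine ⟨14 * K', by positivity, ?_⟩
  intro X hX
  have hX0 : (0:ℝ) < X := by linarith
  have hX1 : (1:ℝ) ≤ X := by linarith
  set R : ℝ := K' * X ^ ((1:ℝ)/5 + η) with hRdef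
  have hRpos : 0 < R := by positivity
  clear_value R
  set S : Set (ℤ × ℤ) := {p : ℤ × ℤ | 1 ≤ p.1 ∧ X ^ ((1 : ℝ) / 11) < (p.1 : ℝ) ∧
      1 ≤ |5 * p.1 ^ 22 - p.2 ^ 2| ∧ ((|5 * p.1 ^ 22 - p.2 ^ 2| : ℤ) : ℝ) ≤ 4 * X} with hSdef
  -- key per-element facts
  have key : ∀ p ∈ S, p.2 ≠ 0 ∧ |(|p.2| - vfun p.1)| ≤ 3 ∧ (p.1 : ℝ) ≤ R := by
    rintro ⟨x, u⟩ ⟨hx1, hxX, hz1, hz4⟩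
    simp only at hx1 hxX hz1 hz4 ⊢
    set z : ℤ := 5 * x ^ 22 - u ^ 2 with hzdef
    clear_value z
    have hx0 : (0:ℤ) < x := hx1
    have hxR0 : (0:ℝ) < (x:ℝ) := by exact_mod_cast hx0
    have hxR1 : (1:ℝ) ≤ (x:ℝ) := by exact_mod_cast hx1
    -- X < x^11
    have hXx11 : X < (x:ℝ) ^ (11:ℕ) := by
      have h1 : X = (X ^ ((1:ℝ)/11)) ^ (11:ℕ) := by
        rw [← Real.rpow_natCast (X ^ ((1:ℝ)/11)) 11, ← Real.rpow_mul hX0.le]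
        norm_num
      calc X = (X ^ ((1:ℝ)/11)) ^ (11:ℕ) := h1
        _ < (x:ℝ) ^ (11:ℕ) :=
          pow_lt_pow_left₀ hxX (Real.rpow_nonneg hX0.le _) (by norm_num)
    -- |z| < 4 x^11  (integers)
    have hz4x : |z| < 4 * x ^ 11 := by
      have h : ((|z|:ℤ) : ℝ) < 4 * (x:ℝ) ^ (11:ℕ) := lt_of_le_of_lt hz4 (by linarith)
      exact_mod_cast h
    have hzne : z ≠ 0 := by
      intro h; rw [h] at hz1; simp at hz1
    -- u ≠ 0
    have hune : u ≠ 0 := by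
      intro h
      have hz5 : z = 5 * x ^ 22 := by rw [hzdef, h]; ring
      rw [hz5, abs_of_nonneg (by positivity : (0:ℤ) ≤ 5 * x ^ 22)] at hz4x
      have hx22 : x ^ 11 ≤ x ^ 22 := pow_le_pow_right₀ hx1 (by norm_num)
      nlinarith [pow_pos hx0 11]
    -- |u| ≤ 3 x^11
    have hu2 : u ^ 2 < 9 * x ^ 22 := by
      have h1 : u ^ 2 ≤ 5 * x ^ 22 + |z| := by
        have := neg_abs_le z
        simp only [hzdef] at this ⊢
        linarith
      have hx22 : x ^ 11 ≤ x ^ 22 := pow_le_pow_right₀ hx1 (by norm_num)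
      nlinarith
    have huabs : |u| ≤ 3 * x ^ 11 := by
      nlinarith [sq_abs u, abs_nonneg u, pow_pos hx0 11, sq_nonneg (|u| - 3 * x ^ 11),
        sq_nonneg (|u| + 3 * x ^ 11)]
    -- |u| ≥ x^11
    have hu2lo : x ^ 22 ≤ u ^ 2 := by
      have h1 : 5 * x ^ 22 - |z| ≤ u ^ 2 := by
        have := le_abs_self z
        simp only [hzdef] at this ⊢
        linarith
      have hx22 : x ^ 11 ≤ x ^ 22 := pow_le_pow_right₀ hx1 (by norm_num)
      nlinarith
    have hulo : x ^ 11 ≤ |u| := by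
      nlinarith [sq_abs u, abs_nonneg u, pow_pos hx0 11, sq_nonneg (|u| - x ^ 11),
        sq_nonneg (|u| + x ^ 11)]
    -- abc application
    set d : ℤ := (Int.gcd (u ^ 2) z : ℤ) with hddef
    clear_value d
    have hdpos : 0 < d := by
      have h : 0 < Int.gcd (u ^ 2) z := Int.gcd_pos_iff.2 (Or.inr hzne)
      rw [hddef]; exact_mod_cast h
    obtain ⟨a, ha⟩ : d ∣ u ^ 2 := by rw [hddef]; exact Int.gcd_dvd_left _ _
    obtain ⟨b, hb⟩ : d ∣ z := by rw [hddef]; exact Int.gcd_dvd_right _ _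
    have hc : 5 * x ^ 22 = d * (a + b) := by
      have : 5 * x ^ 22 = u ^ 2 + z := by rw [hzdef]; ring
      rw [this, ha, hb]; ring
    have ha0 : a ≠ 0 := by
      rintro rfl; rw [mul_zero] at ha; exact pow_ne_zero 2 hune ha
    have hb0 : b ≠ 0 := by
      rintro rfl; rw [mul_zero] at hb; exact hzne hb
    have hc0 : a + b ≠ 0 := by
      rintro h; rw [h, mul_zero] at hc; nlinarith [pow_pos hx0 22]
    have hcop : IsCoprime a b := by
      rw [Int.isCoprime_iff_gcd_eq_one]
      have h1 : Int.gcd (d * a) (d * b) = d.natAbs * Int.gcd a b := Int.gcd_mul_left d a b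
      rw [← ha, ← hb] at h1
      have h2 : Int.gcd (u ^ 2) z = d.natAbs := by
        rw [hddef]; simp [Int.natAbs_natCast]
      rw [h2] at h1
      have hd0 : d.natAbs ≠ 0 := by
        simp [Int.natAbs_ne_zero]; omega
      exact (mul_left_cancel₀ hd0 (by rw [mul_one]; exact h1)).symm
    have habc2 := habc' a b (a + b) ha0 hb0 hc0 hcop rfl
    -- rad bound
    have hsub : ((a * b * (a + b)).natAbs).primeFactors ⊆ ((5 * u * x * z).natAbs).primeFactors := by
      intro p hp
      have hpp := Nat.prime_of_mem_primeFactors hp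
      have hppZ : Prime (p : ℤ) := Nat.prime_iff_prime_int.mp hpp
      have hpd : (p : ℤ) ∣ a * b * (a + b) := by
        have := Nat.dvd_of_mem_primeFactors hp
        rwa [← Int.natAbs_natCast p, Int.natAbs_dvd_natAbs] at this
      have hbig : (p : ℤ) ∣ u ^ 2 * z * (5 * x ^ 22) := by
        have heq : u ^ 2 * z * (5 * x ^ 22) = d ^ 3 * (a * b * (a + b)) := by
          rw [ha, hb, hc]; ring
        rw [heq]; exact hpd.mul_left _
      have h5uxz : (p : ℤ) ∣ 5 * u * x * z := by
        rcases hppZ.dvd_mul.mp hbig with h | h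
        · rcases hppZ.dvd_mul.mp h with h | h
          · obtain ⟨k, hk⟩ : (p:ℤ) ∣ u := hppZ.dvd_of_dvd_pow h
            exact ⟨5 * k * x * z, by rw [hk]; ring⟩
          · obtain ⟨k, hk⟩ := h
            exact ⟨5 * u * x * k, by rw [hk]; ring⟩
        · rcases hppZ.dvd_mul.mp h with h | h
          · obtain ⟨k, hk⟩ := h
            exact ⟨k * u * x * z, by rw [hk]; ring⟩
          · obtain ⟨k, hk⟩ : (p:ℤ) ∣ x := hppZ.dvd_of_dvd_pow h
            exact ⟨5 * u * k * z, by rw [hk]; ring⟩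
      refine Nat.mem_primeFactors.mpr ⟨hpp, ?_, ?_⟩
      · rwa [← Int.natAbs_natCast p, Int.natAbs_dvd_natAbs]
      · simp only [Int.natAbs_ne_zero]
        exact mul_ne_zero (mul_ne_zero (mul_ne_zero (by norm_num) hune) (ne_of_gt hx0)) hzne
    have hradle : (rad ((a * b * (a + b)).natAbs) : ℝ) ≤ 60 * (x:ℝ) ^ (12:ℕ) * X := by
      have h1 : rad ((a * b * (a + b)).natAbs) ≤ (5 * u * x * z).natAbs := by
        refine le_trans (rad_le_rad_of_subset hsub) (rad_le_self ?_)
        simp only [Int.natAbs_ne_zero]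
        exact mul_ne_zero (mul_ne_zero (mul_ne_zero (by norm_num) hune) (ne_of_gt hx0)) hzne
      have h2 : ((5 * u * x * z).natAbs : ℝ) = 5 * |(u:ℝ)| * (x:ℝ) * |(z:ℝ)| := by
        rw [Nat.cast_natAbs]
        push_cast
        rw [abs_mul, abs_mul, abs_mul, abs_of_nonneg (by norm_num : (0:ℝ) ≤ 5),
          abs_of_pos hxR0]
      calc (rad ((a * b * (a + b)).natAbs) : ℝ) ≤ ((5 * u * x * z).natAbs : ℝ) :=
            Nat.cast_le.mpr h1
        _ = 5 * |(u:ℝ)| * (x:ℝ) * |(z:ℝ)| := h2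
        _ ≤ 5 * (3 * (x:ℝ) ^ (11:ℕ)) * (x:ℝ) * (4 * X) := by
            have hu' : |(u:ℝ)| ≤ 3 * (x:ℝ) ^ (11:ℕ) := by exact_mod_cast huabs
            have hz' : |(z:ℝ)| ≤ 4 * X := by
              have h := hz4
              push_cast at h; exact h
            have h1 : (0:ℝ) ≤ |(u:ℝ)| := abs_nonneg _
            have h2 : (0:ℝ) ≤ |(z:ℝ)| := abs_nonneg _
            have hxnn : (0:ℝ) ≤ (x:ℝ) := hxR0.le
            have m1 : 5 * |(u:ℝ)| ≤ 5 * (3 * (x:ℝ) ^ (11:ℕ)) := by linarith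
            have m2 : 5 * |(u:ℝ)| * (x:ℝ) ≤ 5 * (3 * (x:ℝ) ^ (11:ℕ)) * (x:ℝ) :=
              mul_le_mul_of_nonneg_right m1 hxnn
            exact mul_le_mul m2 hz' h2 (by positivity)
        _ = 60 * (x:ℝ) ^ (12:ℕ) * X := by ring
    -- d ≤ 4X
    have hdle : (d : ℝ) ≤ 4 * X := by
      have h1 : d ≤ |z| := Int.le_of_dvd (abs_pos.mpr hzne) ((dvd_abs d z).mpr ⟨b, hb⟩)
      have h2 : ((d:ℤ):ℝ) ≤ ((|z|:ℤ):ℝ) := by exact_mod_cast h1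
      linarith [hz4, h2]
    -- combine
    have hceq : (d:ℝ) * |((a+b : ℤ):ℝ)| = 5 * (x:ℝ) ^ (22:ℕ) := by
      have : |(d * (a+b) : ℤ)| = 5 * x ^ 22 := by
        rw [← hc, abs_of_pos]; positivity
      have h2 : ((|(d * (a+b) : ℤ)| : ℤ) : ℝ) = (d:ℝ) * |((a+b : ℤ):ℝ)| := by
        push_cast [abs_mul]
        rw [abs_of_pos]; exact_mod_cast hdpos
      rw [← h2, this]; push_cast; ring
    have hx22le : 5 * (x:ℝ) ^ (22:ℕ) ≤ (4 * X) * (C₀ * (60 * (x:ℝ) ^ (12:ℕ) * X) ^ (1 + ε)) := by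
      rw [← hceq]
      have h1 : ((|(a+b : ℤ)| : ℤ) : ℝ) = |((a+b : ℤ):ℝ)| := by push_cast; ring
      have h2 : |((a+b : ℤ):ℝ)| ≤ C₀ * (60 * (x:ℝ) ^ (12:ℕ) * X) ^ (1 + ε) := by
        refine le_trans (h1 ▸ habc2) ?_
        have := Real.rpow_le_rpow (by positivity) hradle (by positivity : (0:ℝ) ≤ 1 + ε)
        nlinarith [this, hC₀]
      have hd0 : (0:ℝ) ≤ (d:ℝ) := by exact_mod_cast hdpos.le
      have h3 : (0:ℝ) ≤ C₀ * (60 * (x:ℝ) ^ (12:ℕ) * X) ^ (1 + ε) := by positivity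
      nlinarith [abs_nonneg ((a+b : ℤ):ℝ)]
    -- pull out exponents
    have hexp : ((x:ℝ)) ^ ((10:ℝ) - 12*ε) ≤ K * X ^ ((2:ℝ) + ε) := by
      have hxp12 : ((x:ℝ) ^ (12:ℕ)) ^ (1+ε) = (x:ℝ) ^ ((12:ℝ) * (1+ε)) := by
        rw [← Real.rpow_natCast (x:ℝ) 12, ← Real.rpow_mul hxR0.le]
        norm_num
      have hsplit : (60 * (x:ℝ) ^ (12:ℕ) * X) ^ (1 + ε)
          = (60:ℝ) ^ (1+ε) * (x:ℝ) ^ ((12:ℝ) * (1+ε)) * X ^ (1+ε) := by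
        rw [Real.mul_rpow (by positivity) hX0.le, Real.mul_rpow (by norm_num) (by positivity),
          hxp12]
      have h22 : (x:ℝ) ^ (22:ℕ) = (x:ℝ) ^ ((22:ℝ)) := by
        rw [← Real.rpow_natCast (x:ℝ) 22]
        norm_num
      have hXe : (4 * X) * (C₀ * ((60:ℝ) ^ (1+ε) * (x:ℝ) ^ ((12:ℝ)*(1+ε)) * X ^ (1+ε)))
          = K * (x:ℝ) ^ ((12:ℝ)*(1+ε)) * X ^ ((2:ℝ)+ε) := by
        rw [hKdef]
        have hXs : X ^ ((2:ℝ)+ε) = X * X ^ ((1:ℝ)+ε) := by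
          rw [show (2:ℝ)+ε = 1 + (1+ε) by ring, Real.rpow_add hX0, Real.rpow_one]
        rw [hXs]; ring
      have hmain : (x:ℝ) ^ ((22:ℝ)) ≤ K * (x:ℝ) ^ ((12:ℝ)*(1+ε)) * X ^ ((2:ℝ)+ε) := by
        rw [← hXe]
        calc (x:ℝ) ^ ((22:ℝ)) = (x:ℝ) ^ (22:ℕ) := h22.symm
          _ ≤ 5 * (x:ℝ) ^ (22:ℕ) := by nlinarith [pow_nonneg hxR0.le 22]
          _ ≤ (4 * X) * (C₀ * (60 * (x:ℝ) ^ (12:ℕ) * X) ^ (1 + ε)) := hx22le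
          _ = (4 * X) * (C₀ * ((60:ℝ) ^ (1+ε) * (x:ℝ) ^ ((12:ℝ)*(1+ε)) * X ^ (1+ε))) := by
              rw [hsplit]
      have hxppos : (0:ℝ) < (x:ℝ) ^ ((12:ℝ)*(1+ε)) := Real.rpow_pos_of_pos hxR0 _
      rw [show (10:ℝ) - 12*ε = 22 - 12*(1+ε) by ring, Real.rpow_sub hxR0]
      rw [div_le_iff₀ hxppos]
      calc (x:ℝ) ^ ((22:ℝ)) ≤ K * (x:ℝ) ^ ((12:ℝ)*(1+ε)) * X ^ ((2:ℝ)+ε) := hmain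
        _ = K * X ^ ((2:ℝ)+ε) * (x:ℝ) ^ ((12:ℝ)*(1+ε)) := by ring
    -- conclude x ≤ R
    have hxR : (x:ℝ) ≤ R := by
      set t : ℝ := 1 / (10 - 12*ε) with htdef
      have h10 : (8:ℝ) ≤ 10 - 12*ε := by linarith
      have htpos : 0 < t := by rw [htdef]; positivity
      have ht8 : t ≤ 1 := by
        rw [htdef, div_le_one (by linarith)]; linarith
      have hxrw : (x:ℝ) = ((x:ℝ) ^ ((10:ℝ) - 12*ε)) ^ t := by
        rw [← Real.rpow_mul hxR0.le, mul_one_div, div_self (by linarith : (10:ℝ)-12*ε ≠ 0),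
          Real.rpow_one]
      rw [hxrw]
      have h1 : ((x:ℝ) ^ ((10:ℝ) - 12*ε)) ^ t ≤ (K * X ^ ((2:ℝ)+ε)) ^ t :=
        Real.rpow_le_rpow (Real.rpow_nonneg hxR0.le _) hexp htpos.le
      have h2 : (K * X ^ ((2:ℝ)+ε)) ^ t = K ^ t * (X ^ ((2:ℝ)+ε)) ^ t :=
        Real.mul_rpow hKpos.le (Real.rpow_pos_of_pos hX0 _).le
      have hKt : K ^ t ≤ K' := by
        have hKK' : K ≤ K' := by rw [hK'def]; exact le_max_left _ _
        calc K ^ t ≤ K' ^ t := Real.rpow_le_rpow hKpos.le hKK' htpos.le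
          _ ≤ K' ^ (1:ℝ) := Real.rpow_le_rpow_of_exponent_le hK'1 ht8
          _ = K' := Real.rpow_one _
      have hXt : (X ^ ((2:ℝ)+ε)) ^ t ≤ X ^ ((1:ℝ)/5 + η) := by
        rw [← Real.rpow_mul hX0.le]
        refine Real.rpow_le_rpow_of_exponent_le hX1 ?_
        have hexpineq : (2+ε) * t ≤ 1/5 + ε := by
          rw [htdef, mul_one_div, div_le_iff₀ (by linarith : (0:ℝ) < 10 - 12*ε)]
          nlinarith
        linarith
      calc ((x:ℝ) ^ ((10:ℝ) - 12*ε)) ^ t ≤ K ^ t * (X ^ ((2:ℝ)+ε)) ^ t := by rw [← h2]; exact h1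
        _ ≤ K' * X ^ ((1:ℝ)/5 + η) := by
            have := Real.rpow_nonneg (Real.rpow_pos_of_pos hX0 ((2:ℝ)+ε)).le t
            have hK'0 : (0:ℝ) ≤ K' := hK'pos.le
            nlinarith [Real.rpow_nonneg hKpos.le t, hXt, hKt,
              Real.rpow_pos_of_pos hX0 ((1:ℝ)/5 + η)]
        _ = R := hRdef.symm
    -- the sqrt bounds
    refine ⟨hune, ?_, hxR⟩
    set v : ℤ := vfun x with hvdef
    clear_value v
    have hv0 : 0 ≤ v := by rw [hvdef, vfun]; positivity
    have h5x0 : (0:ℤ) ≤ 5 * x ^ 22 := by positivity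
    have hv2 : v ^ 2 ≤ 5 * x ^ 22 := by
      have h1 : ((5 * x ^ 22).toNat.sqrt : ℤ) ^ 2 ≤ ((5 * x ^ 22).toNat : ℤ) := by
        exact_mod_cast Nat.sqrt_le' (5 * x ^ 22).toNat
      rw [Int.toNat_of_nonneg h5x0] at h1
      rw [hvdef, vfun]; exact h1
    have hv3 : 5 * x ^ 22 < (v + 1) ^ 2 := by
      have h1 : ((5 * x ^ 22).toNat : ℤ) < (((5 * x ^ 22).toNat.sqrt : ℤ) + 1) ^ 2 := by
        exact_mod_cast Nat.lt_succ_sqrt' (5 * x ^ 22).toNat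
      rw [Int.toNat_of_nonneg h5x0] at h1
      rw [hvdef, vfun]; exact h1
    have hx2211 : x ^ 22 = x ^ 11 * x ^ 11 := by ring
    have hx11pos : (0:ℤ) < x ^ 11 := pow_pos hx0 11
    have hvlo : 2 * x ^ 11 ≤ v := by
      by_contra h
      push_neg at h
      have h0 := Int.lt_iff_add_one_le.mp h
      have h1 : (v+1)*(v+1) ≤ (2 * x ^ 11)*(2 * x ^ 11) :=
        mul_self_le_mul_self (by linarith) (by linarith)
      have e1 : (v+1)^2 = (v+1)*(v+1) := by ring
      have e2 : (2 * x ^ 11)*(2 * x ^ 11) = 4*(x^11*x^11) := by ring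
      linarith [hv3, h1, e1, e2, hx2211, pow_pos hx0 22]
    have hvhi : v ≤ 3 * x ^ 11 := by
      by_contra h
      push_neg at h
      have h0 := Int.lt_iff_add_one_le.mp h
      have h1 : (3 * x ^ 11 + 1)*(3 * x ^ 11 + 1) ≤ v * v :=
        mul_self_le_mul_self (by positivity) (by linarith)
      have e3 : v^2 = v*v := by ring
      have e4 : (3 * x ^ 11 + 1)*(3 * x ^ 11 + 1) = 9*(x^11*x^11) + 6*x^11 + 1 := by ring
      linarith [hv2, h1, e3, e4, hx2211, hx11pos, pow_pos hx0 22]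
    -- |u| within 3 of v
    have hz4x' : |5 * x ^ 22 - u ^ 2| ≤ 4 * x ^ 11 - 1 := by
      have h := Int.lt_iff_add_one_le.mp hz4x
      rw [hzdef] at h
      linarith
    have hzup : u ^ 2 - 5 * x ^ 22 ≤ 4 * x ^ 11 - 1 := by
      have h := neg_abs_le (5 * x ^ 22 - u ^ 2)
      linarith
    have hzdown : 5 * x ^ 22 - u ^ 2 ≤ 4 * x ^ 11 - 1 := by
      have h := le_abs_self (5 * x ^ 22 - u ^ 2)
      linarith
    rw [abs_le]
    have hsqu : |u| * |u| = u ^ 2 := by rw [← sq_abs u]; ring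
    constructor
    · -- -3 ≤ |u| - v  i.e. v - |u| ≤ 3
      by_contra hcon
      push_neg at hcon
      have h0 := Int.lt_iff_add_one_le.mp hcon
      have hA : |u| + 4 ≤ v := by linarith
      have h4 : (|u| + 4) * (|u| + 4) ≤ v * v :=
        mul_self_le_mul_self (by positivity) hA
      have e1 : (|u| + 4) * (|u| + 4) = |u| * |u| + 8 * |u| + 16 := by ring
      have e3 : v^2 = v*v := by ring
      linarith [h4, hsqu, hzdown, e1, e3, hv2, hulo, hx11pos]
    · -- |u| - v ≤ 3
      by_contra hcon
      push_neg at hcon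
      have h0 := Int.lt_iff_add_one_le.mp hcon
      have hA : v + 4 ≤ |u| := by linarith
      have h4 : (v + 4) * (v + 4) ≤ |u| * |u| :=
        mul_self_le_mul_self (by linarith [hv0]) hA
      have e1 : (v + 4) * (v + 4) = v*v + 8*v + 16 := by ring
      have e2 : (v + 1)^2 = v*v + 2*v + 1 := by ring
      linarith [h4, hsqu, hzup, e1, e2, hv3, hvlo, hx11pos]
  -- counting via injection
  set B : ℤ := ⌊R⌋ with hBdef
  set ψ : ℤ × ℤ → ℤ × ℤ := fun p => (p.1, if 0 < p.2 then p.2 - vfun p.1 else p.2 + vfun p.1 - 7)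
    with hψdef
  have hmaps : ∀ p ∈ S, ψ p ∈
      (((Finset.Icc (1:ℤ) B ×ˢ Finset.Icc (-10:ℤ) 3) : Finset (ℤ × ℤ)) : Set (ℤ × ℤ)) := by
    rintro ⟨x, u⟩ hp
    obtain ⟨hu0, hv3', hxR⟩ := key _ hp
    obtain ⟨hx1, -, -, -⟩ := hp
    simp only at hx1 hu0 hv3' hxR
    have hxB : x ≤ B := Int.le_floor.mpr hxR
    simp only [hψdef, Finset.mem_coe, Finset.mem_product, Finset.mem_Icc]
    rw [abs_le] at hv3'
    constructor
    · exact ⟨hx1, hxB⟩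
    · by_cases hu : 0 < u
      · rw [if_pos hu]
        rw [abs_of_pos hu] at hv3'
        exact ⟨by linarith [hv3'.1], by linarith [hv3'.2]⟩
      · rw [if_neg hu]
        have hu' : u < 0 := lt_of_le_of_ne (not_lt.mp hu) hu0
        rw [abs_of_neg hu'] at hv3'
        exact ⟨by linarith [hv3'.2], by linarith [hv3'.1]⟩
  have hinj : Set.InjOn ψ S := by
    rintro ⟨x₁, u₁⟩ hp₁ ⟨x₂, u₂⟩ hp₂ heq
    obtain ⟨hu01, hv31, -⟩ := key _ hp₁
    obtain ⟨hu02, hv32, -⟩ := key _ hp₂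
    simp only [hψdef, Prod.mk.injEq] at heq
    obtain ⟨hx, hw⟩ := heq
    subst hx
    simp only at hu01 hu02 hv31 hv32
    rw [abs_le] at hv31 hv32
    refine Prod.ext rfl ?_
    simp only
    by_cases h1 : 0 < u₁ <;> by_cases h2 : 0 < u₂
    · rw [if_pos h1, if_pos h2] at hw; linarith [hw.le, hw.ge]
    · rw [if_pos h1, if_neg h2] at hw
      have hu2' : u₂ < 0 := lt_of_le_of_ne (not_lt.mp h2) hu02
      rw [abs_of_pos h1] at hv31
      rw [abs_of_neg hu2'] at hv32
      exfalso
      linarith [hv31.1, hv32.1, hw.le, hw.ge]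
    · rw [if_neg h1, if_pos h2] at hw
      have hu1' : u₁ < 0 := lt_of_le_of_ne (not_lt.mp h1) hu01
      rw [abs_of_neg hu1'] at hv31
      rw [abs_of_pos h2] at hv32
      exfalso
      linarith [hv31.1, hv32.1, hw.le, hw.ge]
    · rw [if_neg h1, if_neg h2] at hw; linarith [hw.le, hw.ge]
  have hcount : S.ncard ≤ (Finset.Icc (1:ℤ) B ×ˢ Finset.Icc (-10:ℤ) 3).card := by
    have := Set.ncard_le_ncard_of_injOn ψ hmaps hinj (Finset.finite_toSet _)
    rwa [Set.ncard_coe_finset] at this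
  have hcard : (Finset.Icc (1:ℤ) B ×ˢ Finset.Icc (-10:ℤ) 3).card = B.toNat * 14 := by
    rw [Finset.card_product, Int.card_Icc, Int.card_Icc,
      show (3 + 1 - (-10) : ℤ) = 14 by norm_num, show (B + 1 - 1 : ℤ) = B by ring]
    simp [Int.toNat_natCast]
  have hBR : (B.toNat : ℝ) ≤ R := by
    rcases le_or_gt 0 B with h | h
    · have : ((B.toNat : ℤ) : ℝ) = (B : ℝ) := by rw [Int.toNat_of_nonneg h]
      rw [show ((B.toNat : ℝ)) = ((B.toNat : ℤ) : ℝ) by push_cast; ring, this]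
      exact Int.floor_le R
    · rw [Int.toNat_of_nonpos h.le]
      exact_mod_cast hRpos.le
  calc (S.ncard : ℝ) ≤ ((B.toNat * 14 : ℕ) : ℝ) := by
        rw [← hcard]; exact_mod_cast hcount
    _ = 14 * (B.toNat : ℝ) := by push_cast; ring
    _ ≤ 14 * R := by linarith
    _ = 14 * K' * X ^ ((1:ℝ)/5 + η) := by rw [hRdef]; ring
end

section
/- Assume the abc Conjecture. Then there exists a constant C > 0 such that for all real X ≥ 2, the number of primes ℓ ≤ X for which there exist integers x ≥ 1 and y with y^2 = x^11 + ℓ or y^2 = x^11 − ℓ is at most C · X^(13/22). -/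
open Real

lemma rad_dvd_of (a b c : ℕ) (ha : a ≠ 0) (hb : b ≠ 0) (hc : c ≠ 0) :
    rad (a ^ 11 * b * c ^ 2) ∣ a * b * c := by
  have h : (a ^ 11 * b * c ^ 2).primeFactors = (a * b * c).primeFactors := by
    rw [Nat.primeFactors_mul (mul_ne_zero (pow_ne_zero _ ha) hb) (pow_ne_zero _ hc),
      Nat.primeFactors_mul (pow_ne_zero _ ha) hb,
      Nat.primeFactors_pow a (by norm_num), Nat.primeFactors_pow c (by norm_num),
      Nat.primeFactors_mul (mul_ne_zero ha hb) hc, Nat.primeFactors_mul ha hb]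
  unfold rad
  rw [h]
  exact Nat.prod_primeFactors_dvd _

lemma key_x_bound (C₀ : ℝ) (hC₀ : 0 < C₀)
    (h : ∀ a b c : ℤ, a ≠ 0 → b ≠ 0 → c ≠ 0 → IsCoprime a b → a + b = c →
      ((|c| : ℤ) : ℝ) ≤ C₀ * (rad (a * b * c).natAbs : ℝ) ^ (1 + (1:ℝ)/15))
    (X : ℝ) (hX : 2 ≤ X) (l : ℕ) (hl : l.Prime) (hlX : (l : ℝ) ≤ X)
    (x y : ℤ) (hx : 1 ≤ x)
    (hxy : y ^ 2 = x ^ 11 + (l : ℤ) ∨ y ^ 2 = x ^ 11 - (l : ℤ)) :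
    (x : ℝ) ≤ (2 * X) ^ ((1:ℝ)/11) + (2 * C₀) ^ ((1:ℝ)/3) * X ^ ((16:ℝ)/45) := by
  have hX0 : (0:ℝ) < X := by linarith
  have hx0 : (0:ℝ) < (x:ℝ) := by exact_mod_cast hx
  have hKpos : (0:ℝ) ≤ (2 * C₀) ^ ((1:ℝ)/3) * X ^ ((16:ℝ)/45) := by positivity
  by_cases hsmall : (x:ℝ) ^ 11 ≤ 2 * X
  · have h1 : (x:ℝ) = ((x:ℝ) ^ (11:ℕ)) ^ ((11:ℕ):ℝ)⁻¹ :=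
      (Real.pow_rpow_inv_natCast hx0.le (by norm_num)).symm
    have h2 : ((x:ℝ) ^ (11:ℕ)) ^ ((11:ℕ):ℝ)⁻¹ ≤ (2*X) ^ ((11:ℕ):ℝ)⁻¹ :=
      Real.rpow_le_rpow (by positivity) hsmall (by norm_num)
    have : (x:ℝ) ≤ (2*X) ^ ((1:ℝ)/11) := by
      rw [h1]; convert h2 using 2; norm_num
    linarith
  · push_neg at hsmall
    have hx2 : (2:ℝ) ≤ (x:ℝ) := by
      by_contra hc
      push_neg at hc
      have : x = 1 := by
        have : (x:ℝ) < 2 := hc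
        have : x < 2 := by exact_mod_cast this
        omega
      rw [this] at hsmall
      norm_num at hsmall
      linarith
    have hl0 : (0:ℝ) < (l:ℝ) := by exact_mod_cast hl.pos
    have hy2 : (y:ℝ)^2 = (x:ℝ)^11 + (l:ℝ) ∨ (y:ℝ)^2 = (x:ℝ)^11 - (l:ℝ) := by
      rcases hxy with h'|h' <;> [left; right] <;> exact_mod_cast congrArg (Int.cast : ℤ → ℝ) h'
    have hy2lb : (x:ℝ)^11 - X ≤ (y:ℝ)^2 := by rcases hy2 with h'|h' <;> nlinarith
    have hy2ub : (y:ℝ)^2 ≤ (x:ℝ)^11 + X := by rcases hy2 with h'|h' <;> nlinarith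
    have hy0 : y ≠ 0 := by
      intro h0
      rw [h0] at hy2lb
      norm_num at hy2lb
      nlinarith
    -- coprimality
    have hp : Prime (l:ℤ) := Nat.prime_iff_prime_int.mp hl
    have hndvd : ¬ (l:ℤ) ∣ x := by
      intro hd
      have h1 : (l:ℤ) ∣ y ^ 2 := by
        rcases hxy with h'|h' <;> rw [h']
        · exact dvd_add (dvd_pow hd (by norm_num)) dvd_rfl
        · exact dvd_sub (dvd_pow hd (by norm_num)) dvd_rfl
      have h2 : (l:ℤ) ∣ y := hp.dvd_of_dvd_pow h1
      have h3 : (l:ℤ)^2 ∣ y^2 := pow_dvd_pow_of_dvd h2 2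
      have h4 : (l:ℤ)^2 ∣ x^11 := (pow_dvd_pow_of_dvd hd 2).trans (pow_dvd_pow x (by norm_num))
      have h5 : (l:ℤ)^2 ∣ (l:ℤ) := by
        rcases hxy with h'|h'
        · have he : (l:ℤ) = y^2 - x^11 := by linarith
          have hs : (l:ℤ)^2 ∣ y^2 - x^11 := dvd_sub h3 h4
          rwa [← he] at hs
        · have he : (l:ℤ) = x^11 - y^2 := by linarith
          have hs : (l:ℤ)^2 ∣ x^11 - y^2 := dvd_sub h4 h3
          rwa [← he] at hs
      have h6 : (l:ℤ)^2 ≤ (l:ℤ) := Int.le_of_dvd (by exact_mod_cast hl.pos) h5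
      have h7 : (2:ℤ) ≤ (l:ℤ) := by exact_mod_cast hl.two_le
      nlinarith
    have hndvd11 : ¬ (l:ℤ) ∣ x ^ 11 := fun hd => hndvd (hp.dvd_of_dvd_pow hd)
    have hcop : IsCoprime ((l:ℤ)) (x^11) := (Prime.coprime_iff_not_dvd hp).mpr hndvd11
    -- nonzeroness
    have hxne : x ≠ 0 := by omega
    have ha0 : x ^ 11 ≠ 0 := pow_ne_zero _ hxne
    have hb0 : ((l:ℤ)) ≠ 0 := by exact_mod_cast hl.pos.ne'
    have hc0 : y ^ 2 ≠ 0 := pow_ne_zero _ hy0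
    -- apply abc
    have hmain : ((|y ^ 2| : ℤ):ℝ) ≤
        C₀ * (rad (x.natAbs ^ 11 * l * y.natAbs ^ 2) : ℝ) ^ (1 + (1:ℝ)/15) := by
      rcases hxy with h'|h'
      · have := h (x^11) ((l:ℤ)) (y^2) ha0 hb0 hc0 hcop.symm (by linarith)
        simpa [Int.natAbs_mul, Int.natAbs_pow] using this
      · have := h (x^11) (-(l:ℤ)) (y^2) ha0 (neg_ne_zero.mpr hb0) hc0 hcop.symm.neg_right
          (by linarith)
        simpa [Int.natAbs_mul, Int.natAbs_pow, Int.natAbs_neg] using this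
    -- cast facts
    have hxa : ((x.natAbs : ℕ):ℝ) = (x:ℝ) := by
      push_cast [Nat.cast_natAbs]
      exact abs_of_nonneg hx0.le
    have hya : ((y.natAbs : ℕ):ℝ) = |(y:ℝ)| := by
      push_cast [Nat.cast_natAbs]
      rfl
    -- |y| bound
    have hysq : |(y:ℝ)| ^ 2 ≤ (x:ℝ)^13 := by
      rw [sq_abs]
      have e : (x:ℝ)^13 = (x:ℝ)^2 * (x:ℝ)^11 := by ring
      have h4 : (4:ℝ) ≤ (x:ℝ)^2 := by nlinarith
      have h5 : 4 * (x:ℝ)^11 ≤ (x:ℝ)^2 * (x:ℝ)^11 :=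
        mul_le_mul_of_nonneg_right h4 (by positivity)
      nlinarith
    have hyb : |(y:ℝ)| ≤ (x:ℝ)^((13:ℝ)/2) := by
      have h1 : |(y:ℝ)| ≤ Real.sqrt ((x:ℝ)^13) :=
        (Real.le_sqrt (abs_nonneg _) (by positivity)).mpr hysq
      have h2 : Real.sqrt ((x:ℝ)^13) = (x:ℝ)^((13:ℝ)/2) := by
        rw [Real.sqrt_eq_rpow, ← Real.rpow_natCast (x:ℝ) 13, ← Real.rpow_mul hx0.le]
        norm_num
      rwa [h2] at h1
    -- rad bound
    have hxane : x.natAbs ≠ 0 := Int.natAbs_ne_zero.mpr hxne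
    have hyane : y.natAbs ≠ 0 := Int.natAbs_ne_zero.mpr hy0
    have hr1 : (rad (x.natAbs ^ 11 * l * y.natAbs ^ 2) : ℕ) ≤ x.natAbs * l * y.natAbs :=
      Nat.le_of_dvd (Nat.pos_of_ne_zero (mul_ne_zero (mul_ne_zero hxane hl.pos.ne') hyane))
        (rad_dvd_of _ _ _ hxane hl.pos.ne' hyane)
    have hxpow : (x:ℝ) * (x:ℝ)^((13:ℝ)/2) = (x:ℝ)^((15:ℝ)/2) := by
      have e := Real.rpow_add hx0 1 ((13:ℝ)/2)
      rw [Real.rpow_one] at e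
      norm_num at e
      linarith [e]
    have hr3 : ((rad (x.natAbs ^ 11 * l * y.natAbs ^ 2) : ℕ):ℝ) ≤ X * (x:ℝ)^((15:ℝ)/2) := by
      have c1 : ((rad (x.natAbs ^ 11 * l * y.natAbs ^ 2) : ℕ):ℝ)
          ≤ ((x.natAbs * l * y.natAbs : ℕ):ℝ) := by exact_mod_cast hr1
      have c2 : ((x.natAbs * l * y.natAbs : ℕ):ℝ) = (x:ℝ) * (l:ℝ) * |(y:ℝ)| := by
        push_cast [hxa, hya]; ring
      rw [c2] at c1
      have c3 : (x:ℝ) * (l:ℝ) * |(y:ℝ)| ≤ (x:ℝ) * X * (x:ℝ)^((13:ℝ)/2) :=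
        mul_le_mul (mul_le_mul_of_nonneg_left hlX hx0.le) hyb (abs_nonneg _) (by positivity)
      calc ((rad (x.natAbs ^ 11 * l * y.natAbs ^ 2) : ℕ):ℝ)
          ≤ (x:ℝ) * X * (x:ℝ)^((13:ℝ)/2) := le_trans c1 c3
        _ = X * ((x:ℝ) * (x:ℝ)^((13:ℝ)/2)) := by ring
        _ = X * (x:ℝ)^((15:ℝ)/2) := by rw [hxpow]
    -- main chain
    have habs : ((|y ^ 2| : ℤ):ℝ) = (y:ℝ)^2 := by
      rw [abs_of_nonneg (sq_nonneg y)]; push_cast; ring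
    have hstep : (y:ℝ)^2 ≤ C₀ * (X * (x:ℝ)^((15:ℝ)/2)) ^ ((16:ℝ)/15) := by
      rw [habs, (by norm_num : (1:ℝ) + 1/15 = 16/15)] at hmain
      have hmono : (rad (x.natAbs ^ 11 * l * y.natAbs ^ 2) : ℝ) ^ ((16:ℝ)/15)
          ≤ (X * (x:ℝ)^((15:ℝ)/2)) ^ ((16:ℝ)/15) :=
        Real.rpow_le_rpow (Nat.cast_nonneg _) hr3 (by norm_num)
      exact le_trans hmain (mul_le_mul_of_nonneg_left hmono hC₀.le)
    have hexpand : (X * (x:ℝ)^((15:ℝ)/2)) ^ ((16:ℝ)/15) = X ^ ((16:ℝ)/15) * (x:ℝ)^(8:ℕ) := by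
      rw [Real.mul_rpow hX0.le (by positivity), ← Real.rpow_natCast (x:ℝ) 8,
        ← Real.rpow_mul hx0.le]
      norm_num
    have hfin : (x:ℝ)^3 ≤ 2 * C₀ * X ^ ((16:ℝ)/15) := by
      rw [hexpand] at hstep
      have h8 : (0:ℝ) < (x:ℝ)^(8:ℕ) := by positivity
      have h11 : (x:ℝ)^11 = (x:ℝ)^3 * (x:ℝ)^(8:ℕ) := by ring
      have : (x:ℝ)^3 * (x:ℝ)^(8:ℕ) ≤ (2 * C₀ * X ^ ((16:ℝ)/15)) * (x:ℝ)^(8:ℕ) := by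
        have e8 : (x:ℝ)^3 * (x:ℝ)^(8:ℕ) = (x:ℝ)^11 := by ring
        have e9 : (2 * C₀ * X ^ ((16:ℝ)/15)) * (x:ℝ)^(8:ℕ)
            = 2 * (C₀ * (X ^ ((16:ℝ)/15) * (x:ℝ)^(8:ℕ))) := by ring
        rw [e8, e9]
        linarith
      exact le_of_mul_le_mul_right this h8
    have hlast : (x:ℝ) ≤ (2 * C₀) ^ ((1:ℝ)/3) * X ^ ((16:ℝ)/45) := by
      have h1 : (x:ℝ) = ((x:ℝ) ^ (3:ℕ)) ^ ((3:ℕ):ℝ)⁻¹ :=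
        (Real.pow_rpow_inv_natCast hx0.le (by norm_num)).symm
      have h2 : ((x:ℝ) ^ (3:ℕ)) ^ ((3:ℕ):ℝ)⁻¹ ≤ (2 * C₀ * X ^ ((16:ℝ)/15)) ^ ((3:ℕ):ℝ)⁻¹ :=
        Real.rpow_le_rpow (by positivity) (by exact_mod_cast hfin) (by norm_num)
      have h3 : (2 * C₀ * X ^ ((16:ℝ)/15)) ^ ((3:ℕ):ℝ)⁻¹
          = (2 * C₀) ^ ((1:ℝ)/3) * X ^ ((16:ℝ)/45) := by
        rw [Real.mul_rpow (by positivity) (by positivity), ← Real.rpow_mul hX0.le]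
        norm_num
      rw [h1]
      rw [h3] at h2
      exact h2
    have : (0:ℝ) ≤ (2*X) ^ ((1:ℝ)/11) := by positivity
    linarith


lemma inv_pow5_le (t : ℝ) (ht : 2 ≤ t) : (1:ℝ)/t^5 ≤ (1/4) * (1/(t-1)^4 - 1/t^4) := by
  have h1 : (0:ℝ) < t - 1 := by linarith
  have h0 : (0:ℝ) < t := by linarith
  have key : (t-1)^4 * (t+4) ≤ t^5 := by
    nlinarith [mul_nonneg (mul_nonneg h0.le h0.le) (by linarith : (0:ℝ) ≤ t - 2)]
  have e1 : (1/(t-1)^4 - 1/t^4) - 4/t^5 = (t^5 - (t-1)^4*(t+4))/((t-1)^4 * t^5) := by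
    field_simp
    ring
  have h2 : (0:ℝ) ≤ (t^5 - (t-1)^4*(t+4))/((t-1)^4 * t^5) :=
    div_nonneg (by linarith) (by positivity)
  have h3 : 4/t^5 ≤ 1/(t-1)^4 - 1/t^4 := by linarith
  have h4 : (1:ℝ)/t^5 = (1/4)*(4/t^5) := by ring
  rw [h4]
  linarith [mul_le_mul_of_nonneg_left h3 (by norm_num : (0:ℝ) ≤ 1/4)]

lemma sum_Ioc_telescope (f : ℕ → ℝ) (a : ℕ) (m : ℕ) (h : a ≤ m) :
    ∑ n ∈ Finset.Ioc a m, (f (n-1) - f n) = f a - f m := by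
  induction m with
  | zero =>
    have : a = 0 := by omega
    subst this; simp
  | succ k ih =>
    rcases Nat.lt_or_ge a (k+1) with h' | h'
    · have hak : a ≤ k := by omega
      rw [Finset.sum_Ioc_succ_top hak, ih hak]
      simp
    · have : a = k + 1 := by omega
      subst this; simp

lemma tele_sum (a : ℕ) (ha : 2 ≤ a) (m : ℕ) :
    ∑ n ∈ Finset.Ioc a m, (1:ℝ)/(n:ℝ)^5 ≤ 1/(4*(a:ℝ)^4) := by
  have ha0 : (0:ℝ) < (a:ℝ) := by exact_mod_cast Nat.lt_of_lt_of_le (by norm_num) ha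
  rcases le_or_gt a m with h | h
  · have step : ∀ n ∈ Finset.Ioc a m,
        (1:ℝ)/(n:ℝ)^5 ≤ (1/4) * (1/((n-1:ℕ):ℝ)^4 - 1/((n:ℕ):ℝ)^4) := by
      intro n hn
      rw [Finset.mem_Ioc] at hn
      have hn2 : 2 ≤ n := by omega
      have hc : ((n-1:ℕ):ℝ) = (n:ℝ) - 1 := by
        have : (1:ℕ) ≤ n := by omega
        push_cast [Nat.cast_sub this]
        ring
      rw [hc]
      exact inv_pow5_le (n:ℝ) (by exact_mod_cast hn2)
    calc ∑ n ∈ Finset.Ioc a m, (1:ℝ)/(n:ℝ)^5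
        ≤ ∑ n ∈ Finset.Ioc a m, (1/4) * (1/((n-1:ℕ):ℝ)^4 - 1/((n:ℕ):ℝ)^4) :=
          Finset.sum_le_sum step
      _ = (1/4) * ∑ n ∈ Finset.Ioc a m, ((fun k => 1/((k:ℕ):ℝ)^4) (n-1) - (fun k => 1/((k:ℕ):ℝ)^4) n) := by
          rw [Finset.mul_sum]
      _ = (1/4) * (1/(a:ℝ)^4 - 1/(m:ℝ)^4) := by
          rw [sum_Ioc_telescope (fun k => 1/((k:ℕ):ℝ)^4) a m h]
      _ ≤ 1/(4*(a:ℝ)^4) := by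
          have hm : (0:ℝ) ≤ 1/(m:ℝ)^4 := by positivity
          rw [show (1:ℝ)/(4*(a:ℝ)^4) = (1/4) * (1/(a:ℝ)^4) by field_simp]
          nlinarith
  · rw [Finset.Ioc_eq_empty (by omega)]
    simp only [Finset.sum_empty]
    positivity

lemma head_bound (X A : ℝ) (hX : 2 ≤ X) (hA : 0 ≤ A) :
    Real.sqrt (A + X) - Real.sqrt (max (A - X) 0) ≤ 2 * Real.sqrt X := by
  have hX0 : (0:ℝ) < X := by linarith
  rcases le_total A X with h | h
  · have hmax : max (A - X) 0 = 0 := max_eq_right (by linarith)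
    rw [hmax, Real.sqrt_zero, sub_zero]
    have h1 : Real.sqrt (A + X) ≤ Real.sqrt (4 * X) := Real.sqrt_le_sqrt (by linarith)
    have h2 : Real.sqrt (4 * X) = 2 * Real.sqrt X := by
      rw [show (4:ℝ)*X = 2^2 * X by ring, Real.sqrt_mul (by positivity), Real.sqrt_sq (by norm_num)]
    linarith
  · have hmax : max (A - X) 0 = A - X := max_eq_left (by linarith)
    rw [hmax]
    set u := Real.sqrt (A + X) with hu
    set v := Real.sqrt (A - X) with hv
    set w := Real.sqrt X with hw
    have hu2 : u^2 = A + X := Real.sq_sqrt (by linarith)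
    have hv2 : v^2 = A - X := Real.sq_sqrt (by linarith)
    have hw2 : w^2 = X := Real.sq_sqrt (by linarith)
    have hw0 : 0 < w := Real.sqrt_pos.mpr hX0
    have huv : v ≤ u := Real.sqrt_le_sqrt (by linarith)
    have hwu : w ≤ u := Real.sqrt_le_sqrt (by linarith)
    have hv0 : 0 ≤ v := Real.sqrt_nonneg _
    have h1 : (u - v) * w ≤ (u - v) * (u + v) :=
      mul_le_mul_of_nonneg_left (by linarith) (by linarith)
    have h2 : (u - v) * (u + v) = 2 * w^2 := by nlinarith
    have h3 : (u - v) * w ≤ 2 * w * w := by nlinarith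
    have := le_of_mul_le_mul_right (by linarith : (u - v) * w ≤ (2*w) * w) hw0
    linarith

lemma tail_bound (X A : ℝ) (hX : 2 ≤ X) (hA : X ≤ A) :
    Real.sqrt (A + X) - Real.sqrt (max (A - X) 0) ≤ 2 * X / Real.sqrt A := by
  have hX0 : (0:ℝ) < X := by linarith
  have hmax : max (A - X) 0 = A - X := max_eq_left (by linarith)
  rw [hmax]
  set u := Real.sqrt (A + X) with hu
  set v := Real.sqrt (A - X) with hv
  set s := Real.sqrt A with hs
  have hu2 : u^2 = A + X := Real.sq_sqrt (by linarith)
  have hv2 : v^2 = A - X := Real.sq_sqrt (by linarith)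
  have hs2 : s^2 = A := Real.sq_sqrt (by linarith)
  have hs0 : 0 < s := Real.sqrt_pos.mpr (by linarith)
  have huv : v ≤ u := Real.sqrt_le_sqrt (by linarith)
  have hsu : s ≤ u := Real.sqrt_le_sqrt (by linarith)
  have hv0 : 0 ≤ v := Real.sqrt_nonneg _
  have h1 : (u - v) * s ≤ (u - v) * (u + v) :=
    mul_le_mul_of_nonneg_left (by linarith) (by linarith)
  have h2 : (u - v) * (u + v) = 2 * X := by nlinarith
  have h3 : u - v ≤ 2 * X / s := by
    rw [le_div_iff₀ hs0]
    linarith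
  linarith



set_option maxHeartbeats 2000000 in
theorem abc_implies_A2_bound (habc : ABCConjecture) :
    ∃ C : ℝ, 0 < C ∧ ∀ X : ℝ, 2 ≤ X →
      (Set.ncard {ℓ : ℕ | ℓ.Prime ∧ (ℓ : ℝ) ≤ X ∧
          ∃ x y : ℤ, 1 ≤ x ∧ (y ^ 2 = x ^ 11 + (ℓ : ℤ) ∨ y ^ 2 = x ^ 11 - (ℓ : ℤ))} : ℝ)
        ≤ C * X ^ ((13 : ℝ) / 22) := by
  classical
  obtain ⟨C₀, hC₀, habc'⟩ := habc (1/15) (by norm_num)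
  refine ⟨11 + (2*C₀) ^ ((1:ℝ)/3), by positivity, ?_⟩
  intro X hX
  have hX0 : (0:ℝ) < X := by linarith
  have hX1 : (1:ℝ) ≤ X := by linarith
  set S := {ℓ : ℕ | ℓ.Prime ∧ (ℓ : ℝ) ≤ X ∧
      ∃ x y : ℤ, 1 ≤ x ∧ (y ^ 2 = x ^ 11 + (ℓ : ℤ) ∨ y ^ 2 = x ^ 11 - (ℓ : ℤ))} with hSdef
  set B : ℝ := (2*X) ^ ((1:ℝ)/11) + (2*C₀) ^ ((1:ℝ)/3) * X ^ ((16:ℝ)/45) with hBdef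
  have hB0 : (0:ℝ) ≤ B := by positivity
  set Bn : ℕ := ⌊B⌋₊ with hBn
  set Tn : ℕ := ⌈X ^ ((1:ℝ)/11)⌉₊ with hTn
  set M : ℕ := max Bn Tn with hM
  set aa : ℕ → ℕ := fun n => ⌈Real.sqrt (max ((n:ℝ)^11 - X) 0)⌉₊ with haa
  set bb : ℕ → ℕ := fun n => ⌊Real.sqrt ((n:ℝ)^11 + X)⌋₊ with hbb
  set T : Finset (ℕ × ℕ) :=
    (Finset.Icc 1 Bn).biUnion (fun n => {n} ×ˢ Finset.Icc (aa n) (bb n)) with hT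
  set f : ℕ → ℕ × ℕ := fun l =>
    if h : ∃ p : ℤ × ℤ, 1 ≤ p.1 ∧ (p.2^2 = p.1^11 + (l:ℤ) ∨ p.2^2 = p.1^11 - (l:ℤ))
    then (h.choose.1.toNat, h.choose.2.natAbs) else (0,0) with hf
  have hf_spec : ∀ l ∈ S, ∃ x y : ℤ, 1 ≤ x ∧
      (y^2 = x^11 + (l:ℤ) ∨ y^2 = x^11 - (l:ℤ)) ∧ f l = (x.toNat, y.natAbs) := by
    intro l hl
    obtain ⟨hp, hlX, x, y, hx, hxy⟩ := hl
    have hE : ∃ p : ℤ × ℤ, 1 ≤ p.1 ∧ (p.2^2 = p.1^11 + (l:ℤ) ∨ p.2^2 = p.1^11 - (l:ℤ)) :=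
      ⟨(x, y), hx, hxy⟩
    exact ⟨hE.choose.1, hE.choose.2, hE.choose_spec.1, hE.choose_spec.2,
      by simp only [hf, dif_pos hE]⟩
  have hrec : ∀ l ∈ S, ((((f l).2 : ℤ))^2 - (((f l).1 : ℤ))^11).natAbs = l := by
    intro l hl
    obtain ⟨x, y, hx, hxy, hfl⟩ := hf_spec l hl
    rw [hfl]
    simp only
    have h1 : ((x.toNat : ℤ)) = x := Int.toNat_of_nonneg (by linarith)
    have h2 : ((y.natAbs : ℤ))^2 = y^2 := Int.natAbs_sq y
    rw [h1, h2]
    rcases hxy with h'|h'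
    · rw [h']; simp
    · rw [h']; simp
  have hinj : Set.InjOn f S := by
    intro l1 h1 l2 h2 heq
    have e1 := hrec l1 h1
    rw [heq, hrec l2 h2] at e1
    exact e1.symm
  -- membership of images in T
  have hmem : ∀ l ∈ S, f l ∈ (T : Set (ℕ × ℕ)) := by
    intro l hl
    obtain ⟨x, y, hx, hxy, hfl⟩ := hf_spec l hl
    obtain ⟨hp, hlX, -⟩ := hl
    have hxR : ((x.toNat : ℕ):ℝ) = (x:ℝ) := by
      have h1 : ((x.toNat : ℤ)) = x := Int.toNat_of_nonneg (by linarith)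
      exact_mod_cast congrArg (Int.cast : ℤ → ℝ) h1
    have hxB : (x:ℝ) ≤ B := key_x_bound C₀ hC₀ habc' X hX l hp hlX x y hx hxy
    have hl0 : (0:ℝ) < (l:ℝ) := by exact_mod_cast hp.pos
    have hy2 : ((y.natAbs:ℕ):ℝ)^2 = (y:ℝ)^2 := by
      push_cast [Nat.cast_natAbs]
      exact sq_abs _
    have hyub : (y:ℝ)^2 ≤ ((x.toNat:ℕ):ℝ)^11 + X := by
      rw [hxR]
      rcases hxy with h'|h' <;>
        (have := congrArg (Int.cast : ℤ → ℝ) h'; push_cast at this; nlinarith)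
    have hylb : ((x.toNat:ℕ):ℝ)^11 - X ≤ (y:ℝ)^2 := by
      rw [hxR]
      rcases hxy with h'|h' <;>
        (have := congrArg (Int.cast : ℤ → ℝ) h'; push_cast at this; nlinarith)
    rw [hfl]
    simp only [hT, Finset.coe_biUnion, Set.mem_iUnion, Finset.mem_coe]
    refine ⟨x.toNat, ?_, ?_⟩
    · rw [Finset.mem_Icc]
      constructor
      · omega
      · exact Nat.le_floor (by rw [hxR]; exact hxB)
    · rw [Finset.mem_product, Finset.mem_singleton]
      refine ⟨rfl, ?_⟩
      rw [Finset.mem_Icc]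
      constructor
      · rw [haa]
        simp only
        apply Nat.ceil_le.mpr
        have hs1 : Real.sqrt (max (((x.toNat:ℕ):ℝ)^11 - X) 0)
            ≤ Real.sqrt (((y.natAbs:ℕ):ℝ)^2) := by
          apply Real.sqrt_le_sqrt
          rw [hy2]
          exact max_le (by linarith) (sq_nonneg _)
        rwa [Real.sqrt_sq (Nat.cast_nonneg _)] at hs1
      · rw [hbb]
        simp only
        apply Nat.le_floor
        apply (Real.le_sqrt (Nat.cast_nonneg _) (by positivity)).mpr
        rw [hy2]
        exact hyub
  -- cardinality chain
  have hcard : S.ncard ≤ T.card := by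
    calc S.ncard = (f '' S).ncard := (Set.ncard_image_of_injOn hinj).symm
      _ ≤ (↑T : Set (ℕ × ℕ)).ncard :=
          Set.ncard_le_ncard (Set.image_subset_iff.mpr hmem) T.finite_toSet
      _ = T.card := Set.ncard_coe_finset T
  -- real counting function
  set g : ℕ → ℝ := fun n =>
    Real.sqrt ((n:ℝ)^11 + X) - Real.sqrt (max ((n:ℝ)^11 - X) 0) + 1 with hg
  have hg0 : ∀ n, 0 ≤ g n := by
    intro n
    have h1 : Real.sqrt (max ((n:ℝ)^11 - X) 0) ≤ Real.sqrt ((n:ℝ)^11 + X) :=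
      Real.sqrt_le_sqrt (max_le (by linarith) (by positivity))
    simp only [hg]
    linarith
  have hTcard : (T.card : ℝ) ≤ ∑ n ∈ Finset.Icc 1 Bn, g n := by
    have h1 : (T.card : ℝ) ≤
        ∑ n ∈ Finset.Icc 1 Bn, (((Finset.Icc (aa n) (bb n)).card : ℕ) : ℝ) := by
      have h2 := Finset.card_biUnion_le (s := Finset.Icc 1 Bn)
        (t := fun n => {n} ×ˢ Finset.Icc (aa n) (bb n))
      have h3 : (T.card : ℕ) ≤ ∑ n ∈ Finset.Icc 1 Bn, (Finset.Icc (aa n) (bb n)).card := by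
        rw [hT]
        simpa [Finset.card_product] using h2
      exact_mod_cast h3
    refine le_trans h1 (Finset.sum_le_sum ?_)
    intro n hn
    rw [Nat.card_Icc]
    have hbble : ((bb n : ℕ):ℝ) ≤ Real.sqrt ((n:ℝ)^11 + X) := by
      rw [hbb]; exact Nat.floor_le (Real.sqrt_nonneg _)
    have haage : Real.sqrt (max ((n:ℝ)^11 - X) 0) ≤ ((aa n : ℕ):ℝ) := by
      rw [haa]; exact Nat.le_ceil _
    rcases le_or_gt (aa n) (bb n) with h | h
    · have hcast : ((bb n + 1 - aa n : ℕ):ℝ) = ((bb n:ℕ):ℝ) + 1 - ((aa n:ℕ):ℝ) := by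
        have : aa n ≤ bb n + 1 := by omega
        push_cast [Nat.cast_sub this]
        ring
      rw [hcast]
      simp only [hg]
      linarith
    · have : bb n + 1 - aa n = 0 := by omega
      rw [this]
      simpa using hg0 n
  -- extend the summation range and split
  have hext : ∑ n ∈ Finset.Icc 1 Bn, g n ≤ ∑ n ∈ Finset.Ioc 0 M, g n := by
    apply Finset.sum_le_sum_of_subset_of_nonneg
    · intro n hn
      rw [Finset.mem_Icc] at hn
      rw [Finset.mem_Ioc]
      exact ⟨by omega, le_trans hn.2 (le_max_left _ _)⟩
    · exact fun i _ _ => hg0 i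
  have hsplit : ∑ n ∈ Finset.Ioc 0 M, g n
      = ∑ n ∈ Finset.Ioc 0 Tn, g n + ∑ n ∈ Finset.Ioc Tn M, g n :=
    (Finset.sum_Ioc_consecutive g (Nat.zero_le Tn) (le_max_right _ _)).symm
  -- facts about Tn
  have hTnlb : X ^ ((1:ℝ)/11) ≤ (Tn:ℝ) := Nat.le_ceil _
  have hrp1 : (1:ℝ) ≤ X ^ ((1:ℝ)/11) := by
    have := Real.rpow_le_rpow_of_exponent_le hX1 (by norm_num : (0:ℝ) ≤ (1:ℝ)/11)
    rwa [Real.rpow_zero] at this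
  have hTn2 : 2 ≤ Tn := by
    have h1 : (1:ℝ) < X ^ ((1:ℝ)/11) := by
      have h2 : (1:ℝ) ^ ((1:ℝ)/11) < X ^ ((1:ℝ)/11) :=
        Real.rpow_lt_rpow (by norm_num) (by linarith) (by norm_num)
      rwa [Real.one_rpow] at h2
    have := Nat.lt_ceil.mpr (by exact_mod_cast h1 : ((1:ℕ):ℝ) < X ^ ((1:ℝ)/11))
    omega
  have hTnub : (Tn:ℝ) ≤ 2 * X ^ ((1:ℝ)/11) := by
    have h1 : (Tn:ℝ) < X ^ ((1:ℝ)/11) + 1 := Nat.ceil_lt_add_one (by positivity)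
    linarith
  have hsqX : Real.sqrt X = X ^ ((1:ℝ)/2) := Real.sqrt_eq_rpow X
  have hsqX1 : 1 ≤ Real.sqrt X := by
    apply (Real.le_sqrt (by norm_num) (by linarith)).mpr
    norm_num
    linarith
  -- head bound
  have hhead : ∑ n ∈ Finset.Ioc 0 Tn, g n ≤ 6 * X ^ ((13:ℝ)/22) := by
    have hterm : ∀ n ∈ Finset.Ioc 0 Tn, g n ≤ 2 * Real.sqrt X + 1 := by
      intro n _
      have := head_bound X ((n:ℝ)^11) hX (by positivity)
      simp only [hg]
      linarith
    have h1 : ∑ n ∈ Finset.Ioc 0 Tn, g n ≤ (Tn:ℝ) * (2 * Real.sqrt X + 1) := by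
      calc ∑ n ∈ Finset.Ioc 0 Tn, g n ≤ ∑ _n ∈ Finset.Ioc 0 Tn, (2 * Real.sqrt X + 1) :=
            Finset.sum_le_sum hterm
        _ = (Tn:ℝ) * (2 * Real.sqrt X + 1) := by
            rw [Finset.sum_const, Nat.card_Ioc]
            simp only [nsmul_eq_mul, Nat.sub_zero]
            try ring
    have h2 : (Tn:ℝ) * (2 * Real.sqrt X + 1) ≤ (2 * X ^ ((1:ℝ)/11)) * (3 * Real.sqrt X) :=
      mul_le_mul hTnub (by linarith) (by positivity) (by positivity)
    have h3 : (2 * X ^ ((1:ℝ)/11)) * (3 * Real.sqrt X)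
        = 6 * (X ^ ((1:ℝ)/11) * X ^ ((1:ℝ)/2)) := by rw [hsqX]; ring
    have h4 : X ^ ((1:ℝ)/11) * X ^ ((1:ℝ)/2) = X ^ ((13:ℝ)/22) := by
      rw [← Real.rpow_add hX0]
      norm_num
    linarith
  -- tail bound
  have hX21 : (0:ℝ) ≤ X ^ ((21:ℝ)/22) := by positivity
  have htail : ∑ n ∈ Finset.Ioc Tn M, g n
      ≤ 2 * X ^ ((21:ℝ)/22) * (1/(4*(Tn:ℝ)^4)) + (Bn:ℝ) := by
    have hterm : ∀ n ∈ Finset.Ioc Tn M, g n ≤ 2 * X ^ ((21:ℝ)/22) * (1/(n:ℝ)^5) + 1 := by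
      intro n hn
      rw [Finset.mem_Ioc] at hn
      have hn0 : 0 < n := by omega
      have hnR : (0:ℝ) < (n:ℝ) := by exact_mod_cast hn0
      have hcast : X ^ ((1:ℝ)/11) ≤ (n:ℝ) := by
        have : (Tn:ℝ) ≤ (n:ℝ) := by exact_mod_cast Nat.le_of_lt hn.1
        linarith
      have hnX : X ≤ (n:ℝ)^11 := by
        have h1 : (X ^ ((1:ℝ)/11))^(11:ℕ) ≤ (n:ℝ)^(11:ℕ) :=
          pow_le_pow_left₀ (by positivity) hcast 11
        have h2 : (X ^ ((1:ℝ)/11))^(11:ℕ) = X := by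
          rw [← Real.rpow_natCast (X ^ ((1:ℝ)/11)) 11, ← Real.rpow_mul hX0.le]
          norm_num
        rwa [h2] at h1
      have h1 := tail_bound X ((n:ℝ)^11) hX hnX
      -- sqrt((n)^11) = n^5 * sqrt n
      have h2 : Real.sqrt ((n:ℝ)^11) = (n:ℝ)^5 * Real.sqrt (n:ℝ) := by
        rw [show ((n:ℝ)^11) = ((n:ℝ)^5)^2 * (n:ℝ) by ring,
          Real.sqrt_mul (by positivity), Real.sqrt_sq (by positivity)]
      have h3 : X ^ ((1:ℝ)/22) ≤ Real.sqrt (n:ℝ) := by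
        have h4 : Real.sqrt (X ^ ((1:ℝ)/11)) ≤ Real.sqrt (n:ℝ) := Real.sqrt_le_sqrt hcast
        have h5 : Real.sqrt (X ^ ((1:ℝ)/11)) = X ^ ((1:ℝ)/22) := by
          rw [Real.sqrt_eq_rpow, ← Real.rpow_mul hX0.le]
          norm_num
        rwa [h5] at h4
      have hW0 : (0:ℝ) < X ^ ((1:ℝ)/22) := by positivity
      have h6 : 2 * X / Real.sqrt ((n:ℝ)^11) ≤ 2 * X / ((n:ℝ)^5 * X ^ ((1:ℝ)/22)) := by
        rw [h2]
        apply div_le_div_of_nonneg_left (by linarith) (by positivity)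
        exact mul_le_mul_of_nonneg_left h3 (by positivity)
      have h7 : 2 * X / ((n:ℝ)^5 * X ^ ((1:ℝ)/22)) = 2 * X ^ ((21:ℝ)/22) * (1/(n:ℝ)^5) := by
        have hXsplit : X ^ ((21:ℝ)/22) * X ^ ((1:ℝ)/22) = X := by
          rw [← Real.rpow_add hX0]
          norm_num
        have hden : ((n:ℝ)^5 * X ^ ((1:ℝ)/22)) ≠ 0 := by positivity
        rw [div_eq_iff hden]
        have hq : 2 * X ^ ((21:ℝ)/22) * (1/(n:ℝ)^5) * ((n:ℝ)^5 * X ^ ((1:ℝ)/22))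
            = 2 * (X ^ ((21:ℝ)/22) * X ^ ((1:ℝ)/22)) := by
          field_simp
        rw [hq, hXsplit]
      simp only [hg]
      rw [h7] at h6
      linarith
    have hsum1 : ∑ n ∈ Finset.Ioc Tn M, g n
        ≤ ∑ n ∈ Finset.Ioc Tn M, (2 * X ^ ((21:ℝ)/22) * (1/(n:ℝ)^5) + 1) :=
      Finset.sum_le_sum hterm
    have hsum2 : ∑ n ∈ Finset.Ioc Tn M, (2 * X ^ ((21:ℝ)/22) * (1/(n:ℝ)^5) + 1)
        = 2 * X ^ ((21:ℝ)/22) * (∑ n ∈ Finset.Ioc Tn M, (1:ℝ)/(n:ℝ)^5)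
          + ((M - Tn : ℕ):ℝ) := by
      rw [Finset.sum_add_distrib, ← Finset.mul_sum, Finset.sum_const, Nat.card_Ioc]
      simp [nsmul_eq_mul]
    have hsum3 : ∑ n ∈ Finset.Ioc Tn M, (1:ℝ)/(n:ℝ)^5 ≤ 1/(4*(Tn:ℝ)^4) :=
      tele_sum Tn hTn2 M
    have hMB : ((M - Tn : ℕ):ℝ) ≤ (Bn:ℝ) := by
      have : M - Tn ≤ Bn := by omega
      exact_mod_cast this
    have h8 : 2 * X ^ ((21:ℝ)/22) * (∑ n ∈ Finset.Ioc Tn M, (1:ℝ)/(n:ℝ)^5)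
        ≤ 2 * X ^ ((21:ℝ)/22) * (1/(4*(Tn:ℝ)^4)) :=
      mul_le_mul_of_nonneg_left hsum3 (by positivity)
    linarith
  -- simplify tail main term
  have htail2 : 2 * X ^ ((21:ℝ)/22) * (1/(4*(Tn:ℝ)^4)) ≤ (1/2) * X ^ ((13:ℝ)/22) := by
    have h1 : (X ^ ((1:ℝ)/11))^(4:ℕ) ≤ (Tn:ℝ)^(4:ℕ) :=
      pow_le_pow_left₀ (by positivity) hTnlb 4
    have h2 : (X ^ ((1:ℝ)/11))^(4:ℕ) = X ^ ((4:ℝ)/11) := by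
      rw [← Real.rpow_natCast (X ^ ((1:ℝ)/11)) 4, ← Real.rpow_mul hX0.le]
      norm_num
    have h3 : X ^ ((4:ℝ)/11) ≤ (Tn:ℝ)^4 := by rw [← h2]; exact_mod_cast h1
    have h4 : 1/(4*(Tn:ℝ)^4) ≤ 1/(4 * X ^ ((4:ℝ)/11)) := by
      apply one_div_le_one_div_of_le (by positivity)
      linarith
    have h5 : 2 * X ^ ((21:ℝ)/22) * (1/(4 * X ^ ((4:ℝ)/11))) = (1/2) * X ^ ((13:ℝ)/22) := by
      have h6 : X ^ ((21:ℝ)/22) = X ^ ((13:ℝ)/22) * X ^ ((4:ℝ)/11) := by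
        rw [← Real.rpow_add hX0]
        norm_num
      have hx4 : X ^ ((4:ℝ)/11) ≠ 0 := by positivity
      rw [h6]
      field_simp
      ring
    calc 2 * X ^ ((21:ℝ)/22) * (1/(4*(Tn:ℝ)^4))
        ≤ 2 * X ^ ((21:ℝ)/22) * (1/(4 * X ^ ((4:ℝ)/11))) :=
          mul_le_mul_of_nonneg_left h4 (by positivity)
      _ = (1/2) * X ^ ((13:ℝ)/22) := h5
  -- Bn bound
  have hBnb : (Bn:ℝ) ≤ (2 + (2*C₀) ^ ((1:ℝ)/3)) * X ^ ((13:ℝ)/22) := by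
    have h1 : (Bn:ℝ) ≤ B := Nat.floor_le hB0
    have h2 : (2*X) ^ ((1:ℝ)/11) ≤ 2 * X ^ ((13:ℝ)/22) := by
      rw [Real.mul_rpow (by norm_num) hX0.le]
      have h3 : (2:ℝ) ^ ((1:ℝ)/11) ≤ 2 := by
        have := Real.rpow_le_rpow_of_exponent_le (by norm_num : (1:ℝ) ≤ 2)
          (by norm_num : (1:ℝ)/11 ≤ 1)
        rwa [Real.rpow_one] at this
      have h4 : X ^ ((1:ℝ)/11) ≤ X ^ ((13:ℝ)/22) :=
        Real.rpow_le_rpow_of_exponent_le hX1 (by norm_num)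
      exact mul_le_mul h3 h4 (by positivity) (by norm_num)
    have h5 : (2*C₀) ^ ((1:ℝ)/3) * X ^ ((16:ℝ)/45)
        ≤ (2*C₀) ^ ((1:ℝ)/3) * X ^ ((13:ℝ)/22) :=
      mul_le_mul_of_nonneg_left
        (Real.rpow_le_rpow_of_exponent_le hX1 (by norm_num)) (by positivity)
    rw [hBdef] at h1
    linarith
  -- assemble everything
  have hfinal : (S.ncard : ℝ) ≤ (T.card : ℝ) := by exact_mod_cast hcard
  have hXr0 : (0:ℝ) ≤ X ^ ((13:ℝ)/22) := by positivity
  calc (S.ncard : ℝ) ≤ (T.card : ℝ) := hfinal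
    _ ≤ ∑ n ∈ Finset.Icc 1 Bn, g n := hTcard
    _ ≤ ∑ n ∈ Finset.Ioc 0 M, g n := hext
    _ = ∑ n ∈ Finset.Ioc 0 Tn, g n + ∑ n ∈ Finset.Ioc Tn M, g n := hsplit
    _ ≤ 6 * X ^ ((13:ℝ)/22) + (2 * X ^ ((21:ℝ)/22) * (1/(4*(Tn:ℝ)^4)) + (Bn:ℝ)) := by
        linarith
    _ ≤ 6 * X ^ ((13:ℝ)/22) + ((1/2) * X ^ ((13:ℝ)/22)
          + (2 + (2*C₀) ^ ((1:ℝ)/3)) * X ^ ((13:ℝ)/22)) := by linarith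
    _ ≤ (11 + (2*C₀) ^ ((1:ℝ)/3)) * X ^ ((13:ℝ)/22) := by
        have hK : (0:ℝ) ≤ (2*C₀) ^ ((1:ℝ)/3) := by positivity
        nlinarith
end

section
/- Assume the abc Conjecture. Then there exists a constant C > 0 such that for all real X ≥ 2, the number of primes ℓ ≤ X for which there exist integers x ≥ 1 and u with u^2 = 5·x^22 + 4ℓ or u^2 = 5·x^22 − 4ℓ is at most C · X^(6/11). -/
open Real

lemma rad_pos (n : ℕ) : 0 < rad n :=
  Finset.prod_pos fun p hp => (Nat.prime_of_mem_primeFactors hp).pos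

lemma rad_le {n : ℕ} (h : n ≠ 0) : rad n ≤ n :=
  Nat.le_of_dvd (Nat.pos_of_ne_zero h) (Nat.prod_primeFactors_dvd n)

lemma rad_mul_le {m n : ℕ} (hm : m ≠ 0) (hn : n ≠ 0) : rad (m * n) ≤ rad m * rad n := by
  unfold rad
  rw [Nat.primeFactors_mul hm hn]
  calc ∏ p ∈ m.primeFactors ∪ n.primeFactors, p
      = (∏ p ∈ m.primeFactors, p) * ∏ p ∈ n.primeFactors \ m.primeFactors, p := by
        rw [← Finset.prod_union (Finset.disjoint_sdiff)]
        congr 1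
        rw [Finset.union_sdiff_self_eq_union]
    _ ≤ (∏ p ∈ m.primeFactors, p) * ∏ p ∈ n.primeFactors, p := by
        apply Nat.mul_le_mul_left
        apply Finset.prod_le_prod_of_subset_of_one_le' (Finset.sdiff_subset)
        intro i hi _
        exact (Nat.prime_of_mem_primeFactors hi).one_lt.le

lemma rad_pow (n k : ℕ) (hk : k ≠ 0) : rad (n ^ k) = rad n := by
  unfold rad; rw [Nat.primeFactors_pow n hk]

lemma rad_prime {p : ℕ} (hp : p.Prime) : rad p = p := by
  unfold rad; rw [hp.primeFactors, Finset.prod_singleton]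

lemma Ioc_succ (a n : ℤ) (h : a ≤ n) : Finset.Ioc a (n+1) = insert (n+1) (Finset.Ioc a n) := by
  ext z; simp only [Finset.mem_Ioc, Finset.mem_insert]; omega


lemma sum_inv_sq_le (a b : ℤ) (ha : 1 ≤ a) :
    ∑ x ∈ Finset.Ioc a b, (1:ℝ) / (x:ℝ)^2 ≤ 1 / (a:ℝ) := by
  have ha' : (1:ℝ) ≤ (a:ℝ) := by exact_mod_cast ha
  have key : ∀ b : ℤ, a ≤ b → ∑ x ∈ Finset.Ioc a b, (1:ℝ) / (x:ℝ)^2 ≤ 1/(a:ℝ) - 1/(b:ℝ) := by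
    refine Int.le_induction ?_ ?_
    · simp
    · intro n hn ih
      rw [Ioc_succ a n hn, Finset.sum_insert (by simp)]
      have hn' : (a:ℝ) ≤ (n:ℝ) := by exact_mod_cast hn
      have hnpos : (0:ℝ) < (n:ℝ) := by linarith
      have hstep : (1:ℝ)/((n:ℝ)+1)^2 ≤ 1/(n:ℝ) - 1/((n:ℝ)+1) := by
        rw [div_sub_div _ _ (ne_of_gt hnpos) (by positivity)]
        rw [div_le_div_iff₀ (by positivity) (by positivity)]
        ring_nf
        nlinarith
      push_cast
      push_cast at ih
      linarith
  by_cases hb : a ≤ b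
  · have hbpos : (0:ℝ) < (b:ℝ) := by exact_mod_cast lt_of_lt_of_le (by omega) hb
    have h2 : (0:ℝ) ≤ 1/(b:ℝ) := by positivity
    linarith [key b hb]
  · rw [Finset.Ioc_eq_empty (by omega)]
    simp; positivity

lemma card_Icc_le_real (a b : ℤ) (ra rb : ℝ) (h1 : ra ≤ (a:ℝ)) (h2 : (b:ℝ) ≤ rb)
    (h3 : ra ≤ rb) : ((Finset.Icc a b).card : ℝ) ≤ rb - ra + 1 := by
  rw [Int.card_Icc]
  rcases le_or_gt (b + 1 - a) 0 with h | h
  · rw [Int.toNat_of_nonpos h]; push_cast; linarith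
  · have he : (((b + 1 - a).toNat : ℕ) : ℝ) = ((b + 1 - a : ℤ) : ℝ) := by
      exact_mod_cast Int.toNat_of_nonneg h.le
    rw [he]; push_cast; linarith

lemma real_calc {C X x u R : ℝ} (hC : 0 < C) (hX : 2 ≤ X) (hx : 1 ≤ x)
    (hu : x^11 ≤ u) (hu3 : u ≤ 3*x^11)
    (hR : 0 ≤ R) (hRle : R ≤ 2^26 * X * x * u)
    (habs : u^2 ≤ 4 * (C * R ^ ((3:ℝ)/2))) :
    x^4 ≤ 10^14 * C * X ^ ((3:ℝ)/2) := by
  have hxpos : (0:ℝ) < x := by linarith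
  have hXpos : (0:ℝ) < X := by linarith
  have hupos : (0:ℝ) < u := lt_of_lt_of_le (by positivity) hu
  have h1 : R ≤ 2^28 * X * x^12 := by nlinarith [pow_pos hxpos 11, pow_pos hxpos 12]
  have h2 : R ^ ((3:ℝ)/2) ≤ (2^28 * X * x^12) ^ ((3:ℝ)/2) :=
    rpow_le_rpow hR (h1) (by norm_num)
  have h3 : (2^28 * X * x^12 : ℝ) ^ ((3:ℝ)/2)
      = (2:ℝ)^(42:ℕ) * X ^ ((3:ℝ)/2) * x^(18:ℕ) := by
    rw [mul_rpow (by positivity) (by positivity), mul_rpow (by positivity) (by positivity)]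
    congr 1
    · congr 1
      rw [← rpow_natCast (2:ℝ) 28, ← rpow_mul (by norm_num : (0:ℝ) ≤ 2), ← rpow_natCast (2:ℝ) 42]
      norm_num
    · rw [← rpow_natCast x 12, ← rpow_mul hxpos.le, ← rpow_natCast x 18]
      norm_num
  have h4 : x^22 ≤ u^2 := by nlinarith [pow_pos hxpos 11]
  have hXr : (0:ℝ) ≤ X ^ ((3:ℝ)/2) := by positivity
  have h5 : x^22 ≤ 4 * C * ((2:ℝ)^(42:ℕ) * X ^ ((3:ℝ)/2) * x^(18:ℕ)) := by
    have hh : 4 * (C * R ^ ((3:ℝ)/2)) ≤ 4 * (C * ((2^28 * X * x^12 : ℝ) ^ ((3:ℝ)/2))) := by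
      nlinarith [rpow_nonneg hR ((3:ℝ)/2)]
    have := habs.trans hh
    rw [h3] at this
    nlinarith
  have hx18 : (0:ℝ) < x^(18:ℕ) := by positivity
  have h6 : x^4 ≤ 4 * C * ((2:ℝ)^(42:ℕ) * X ^ ((3:ℝ)/2)) := by
    have : x^4 * x^(18:ℕ) ≤ (4 * C * ((2:ℝ)^(42:ℕ) * X ^ ((3:ℝ)/2))) * x^(18:ℕ) := by
      calc x^4 * x^(18:ℕ) = x^22 := by ring
        _ ≤ 4 * C * ((2:ℝ)^(42:ℕ) * X ^ ((3:ℝ)/2) * x^(18:ℕ)) := h5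
        _ = (4 * C * ((2:ℝ)^(42:ℕ) * X ^ ((3:ℝ)/2))) * x^(18:ℕ) := by ring
    exact le_of_mul_le_mul_right this hx18
  have : (0:ℝ) ≤ C * X ^ ((3:ℝ)/2) := by positivity
  nlinarith

set_option maxHeartbeats 2000000 in
lemma key (habc : ABCConjecture) :
    ∃ C₂ : ℝ, 1 ≤ C₂ ∧ ∀ X : ℝ, 2 ≤ X → ∀ ℓ : ℕ, ℓ.Prime → ℓ ≠ 2 → ℓ ≠ 5 → (ℓ:ℝ) ≤ X →
      ∀ x u : ℤ, 1 ≤ x →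
      (u ^ 2 = 5 * x ^ 22 + 4 * (ℓ:ℤ) ∨ u ^ 2 = 5 * x ^ 22 - 4 * (ℓ:ℤ)) →
      (x : ℝ) ≤ C₂ * X ^ ((3:ℝ)/8) := by
  obtain ⟨C, hC, hABC⟩ := habc (1/2) (by norm_num)
  refine ⟨max 1 ((10^14*C) ^ ((1:ℝ)/4)), le_max_left _ _, ?_⟩
  intro X hX ℓ hp hne2 hne5 hlX x u hx heq
  have hXpos : (0:ℝ) < X := by linarith
  have hx1 : (1:ℝ) ≤ (x:ℝ) := by exact_mod_cast hx
  by_cases hsmall : ((x:ℝ))^(22:ℕ) ≤ X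
  · have h1 : (x:ℝ) ≤ X ^ ((1:ℝ)/22) := by
      calc (x:ℝ) = (((x:ℝ))^(22:ℕ)) ^ ((1:ℝ)/22) := by
            rw [← rpow_natCast (x:ℝ) 22, ← rpow_mul (by linarith)]; norm_num
        _ ≤ X ^ ((1:ℝ)/22) := rpow_le_rpow (by positivity) hsmall (by norm_num)
    have h2 : X ^ ((1:ℝ)/22) ≤ X ^ ((3:ℝ)/8) :=
      rpow_le_rpow_of_exponent_le (by linarith) (by norm_num)
    calc (x:ℝ) ≤ X ^ ((3:ℝ)/8) := h1.trans h2
      _ ≤ _ := le_mul_of_one_le_left (by positivity) (le_max_left _ _)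
  · push_neg at hsmall
    suffices hx4 : ((x:ℝ))^4 ≤ 10^14 * C * X ^ ((3:ℝ)/2) by
      have hC3 : (0:ℝ) < 10^14*C := by positivity
      have hstep : (x:ℝ) ≤ (10^14*C * X ^ ((3:ℝ)/2)) ^ ((1:ℝ)/4) := by
        calc (x:ℝ) = (((x:ℝ))^(4:ℕ)) ^ ((1:ℝ)/4) := by
              rw [← rpow_natCast (x:ℝ) 4, ← rpow_mul (by linarith)]; norm_num
          _ ≤ _ := rpow_le_rpow (by positivity) (by exact_mod_cast hx4) (by norm_num)
      calc (x:ℝ) ≤ (10^14*C * X ^ ((3:ℝ)/2)) ^ ((1:ℝ)/4) := hstep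
        _ = (10^14*C) ^ ((1:ℝ)/4) * (X ^ ((3:ℝ)/2)) ^ ((1:ℝ)/4) :=
            mul_rpow hC3.le (by positivity)
        _ = (10^14*C) ^ ((1:ℝ)/4) * X ^ ((3:ℝ)/8) := by
            rw [← rpow_mul hXpos.le]; norm_num
        _ ≤ _ := mul_le_mul_of_nonneg_right (le_max_right _ _) (by positivity)
    -- core
    have hLp : Prime ((ℓ:ℤ)) := Nat.prime_iff_prime_int.mp hp
    have hlpos : (0:ℤ) < (ℓ:ℤ) := by exact_mod_cast hp.pos
    have hlx22 : (ℓ:ℤ) < x^22 := by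
      have h' : (ℓ:ℝ) < ((x:ℝ))^(22:ℕ) := lt_of_le_of_lt hlX hsmall
      exact_mod_cast h'
    have hu2ge : x^22 ≤ u^2 := by rcases heq with h|h <;> nlinarith
    have hu2le : u^2 ≤ 9*x^22 := by rcases heq with h|h <;> nlinarith
    have hxpos : (0:ℤ) < x := hx
    have hu0 : u ≠ 0 := by
      intro h; rw [h] at hu2ge; simp at hu2ge; nlinarith [pow_pos hxpos 22]
    -- ℓ does not divide x
    have hLx : ¬ (ℓ:ℤ) ∣ x := by
      intro hdvd
      have hdx22 : (ℓ:ℤ) ∣ 5*x^22 := Dvd.dvd.mul_left (hdvd.pow (by norm_num)) 5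
      have hdu2 : (ℓ:ℤ) ∣ u^2 := by
        rcases heq with h|h <;> rw [h]
        · exact dvd_add hdx22 ⟨4, by ring⟩
        · exact dvd_sub hdx22 ⟨4, by ring⟩
      have hdu : (ℓ:ℤ) ∣ u := hLp.dvd_of_dvd_pow hdu2
      have hd2u2 : ((ℓ:ℤ))^2 ∣ u^2 := pow_dvd_pow_of_dvd hdu 2
      have hd2x : ((ℓ:ℤ))^2 ∣ 5*x^22 := by
        have : ((ℓ:ℤ))^2 ∣ x^2 := pow_dvd_pow_of_dvd hdvd 2
        exact Dvd.dvd.mul_left (this.trans (pow_dvd_pow x (by norm_num))) 5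
      have hd4l : ((ℓ:ℤ))^2 ∣ 4*(ℓ:ℤ) := by
        rcases heq with h|h
        · have : 4*(ℓ:ℤ) = u^2 - 5*x^22 := by linarith
          rw [this]; exact dvd_sub hd2u2 hd2x
        · have : 4*(ℓ:ℤ) = 5*x^22 - u^2 := by linarith
          rw [this]; exact dvd_sub hd2x hd2u2
      obtain ⟨k, hk⟩ := hd4l
      have h4 : (4:ℤ) = (ℓ:ℤ) * k := by
        have := hk
        have hL0 : (ℓ:ℤ) ≠ 0 := ne_of_gt hlpos
        exact mul_left_cancel₀ hL0 (by linear_combination this)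
      have : (ℓ:ℤ) ∣ 4 := ⟨k, h4⟩
      have hl4 : ℓ ∣ 4 := by exact_mod_cast this
      have : ℓ = 2 := by
        have := (Nat.prime_dvd_prime_iff_eq hp (by norm_num)).mp (hp.dvd_of_dvd_pow (show ℓ ∣ 2^2 by norm_num [hl4]))
        exact this
      exact hne2 this
    -- real-side common facts
    have hxRpos : (0:ℝ) < (x:ℝ) := by exact_mod_cast hxpos
    have huabs : (0:ℝ) < |(u:ℝ)| := by
      simp only [abs_pos]; exact_mod_cast hu0
    have h22R : ((x:ℝ))^22 ≤ |(u:ℝ)|^2 := by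
      rw [sq_abs]; exact_mod_cast hu2ge
    have h9R : |(u:ℝ)|^2 ≤ 9*((x:ℝ))^22 := by
      rw [sq_abs]; exact_mod_cast hu2le
    have hu_lo : ((x:ℝ))^11 ≤ |(u:ℝ)| := by
      nlinarith [pow_pos hxRpos 11, sq_nonneg (((x:ℝ))^11 - |(u:ℝ)|)]
    have hu_hi : |(u:ℝ)| ≤ 3*((x:ℝ))^11 := by
      nlinarith [pow_pos hxRpos 11, sq_nonneg (3*((x:ℝ))^11 - |(u:ℝ)|)]
    have hexp : (1 + (1:ℝ)/2) = (3:ℝ)/2 := by norm_num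
    rcases Int.even_or_odd x with hev | hod
    · -- x even
      obtain ⟨y, hy⟩ := hev
      have hx2y : x = 2*y := by omega
      have h2u2 : (2:ℤ) ∣ u^2 := by
        rcases heq with h|h <;> rw [h, hx2y]
        · exact ⟨5*2^21*y^22 + 2*(ℓ:ℤ), by ring⟩
        · exact ⟨5*2^21*y^22 - 2*(ℓ:ℤ), by ring⟩
      obtain ⟨w, hw⟩ := Int.prime_two.dvd_of_dvd_pow h2u2
      have hw0 : w ≠ 0 := by rintro rfl; simp at hw; exact hu0 hw
      have hy1 : 1 ≤ y := by omega
      have hypos : (0:ℤ) < y := hy1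
      have heqw : w^2 = 5242880*y^22 + (ℓ:ℤ) ∨ w^2 = 5242880*y^22 - (ℓ:ℤ) := by
        rcases heq with h|h
        · left; rw [hx2y, hw] at h
          have h4 : 4*(w^2) = 4*(5242880*y^22 + (ℓ:ℤ)) := by linear_combination h
          linarith
        · right; rw [hx2y, hw] at h
          have h4 : 4*(w^2) = 4*(5242880*y^22 - (ℓ:ℤ)) := by linear_combination h
          linarith
      have hLa : ¬ (ℓ:ℤ) ∣ 5242880*y^22 := by
        intro hd
        rcases hLp.dvd_mul.mp hd with h|h
        · have hnat : ℓ ∣ 5242880 := by exact_mod_cast h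
          have hnat' : ℓ ∣ 2^20*5 := by norm_num at hnat ⊢; exact hnat
          rcases (Nat.Prime.dvd_mul hp).mp hnat' with h'|h'
          · exact hne2 ((Nat.prime_dvd_prime_iff_eq hp Nat.prime_two).mp
              (hp.dvd_of_dvd_pow h'))
          · exact hne5 ((Nat.prime_dvd_prime_iff_eq hp (by norm_num)).mp h')
        · exact hLx ((hLp.dvd_of_dvd_pow h).trans ⟨2, by omega⟩)
      have hcop : IsCoprime (5242880*y^22) ((ℓ:ℤ)) :=
        ((Prime.coprime_iff_not_dvd hLp).mpr hLa).symm
      have ha0 : (5242880*y^22 : ℤ) ≠ 0 := by positivity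
      have hc0 : (w^2 : ℤ) ≠ 0 := pow_ne_zero 2 hw0
      have hya0 : y.natAbs ≠ 0 := by simp [Int.natAbs_ne_zero]; omega
      have hwa0 : w.natAbs ≠ 0 := by simp [Int.natAbs_ne_zero]; exact hw0
      have hl0 : ℓ ≠ 0 := hp.ne_zero
      have hNabs : (5242880*y^22 * (ℓ:ℤ) * w^2).natAbs
          = 5242880 * y.natAbs^22 * ℓ * w.natAbs^2 := by
        simp [Int.natAbs_mul, Int.natAbs_pow]
      have hradle : rad (5242880 * y.natAbs^22 * ℓ * w.natAbs^2)
          ≤ 5242880 * y.natAbs * ℓ * w.natAbs := by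
        have h1 := rad_mul_le (mul_ne_zero (mul_ne_zero (by norm_num : (5242880:ℕ) ≠ 0)
          (pow_ne_zero 22 hya0)) hl0) (pow_ne_zero 2 hwa0)
        have h2 := rad_mul_le (mul_ne_zero (by norm_num : (5242880:ℕ) ≠ 0)
          (pow_ne_zero 22 hya0)) hl0
        have h3 := rad_mul_le (by norm_num : (5242880:ℕ) ≠ 0) (pow_ne_zero 22 hya0)
        have h4 : rad (y.natAbs^22) = rad y.natAbs := rad_pow _ 22 (by norm_num)
        have h5 : rad (w.natAbs^2) = rad w.natAbs := rad_pow _ 2 (by norm_num)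
        have h6 : rad y.natAbs ≤ y.natAbs := rad_le hya0
        have h7 : rad w.natAbs ≤ w.natAbs := rad_le hwa0
        have h8 : rad 5242880 ≤ 5242880 := rad_le (by norm_num : (5242880:ℕ) ≠ 0)
        have h9 : rad ℓ = ℓ := rad_prime hp
        calc rad (5242880 * y.natAbs^22 * ℓ * w.natAbs^2)
            ≤ rad (5242880 * y.natAbs^22 * ℓ) * rad (w.natAbs^2) := h1
          _ ≤ (rad (5242880 * y.natAbs^22) * rad ℓ) * rad (w.natAbs^2) :=
              Nat.mul_le_mul h2 le_rfl
          _ ≤ ((rad 5242880 * rad (y.natAbs^22)) * rad ℓ) * rad (w.natAbs^2) :=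
              Nat.mul_le_mul (Nat.mul_le_mul h3 le_rfl) le_rfl
          _ = ((rad 5242880 * rad y.natAbs) * ℓ) * rad w.natAbs := by rw [h4, h5, h9]
          _ ≤ ((5242880 * y.natAbs) * ℓ) * w.natAbs :=
              Nat.mul_le_mul (Nat.mul_le_mul (Nat.mul_le_mul h8 h6) le_rfl) h7
          _ = 5242880 * y.natAbs * ℓ * w.natAbs := by ring
      have hrad_real : ((rad (5242880 * y.natAbs^22 * ℓ * w.natAbs^2) : ℕ) : ℝ)
          ≤ 2^26 * X * (x:ℝ) * |(u:ℝ)| := by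
        have hyaR : ((y.natAbs:ℕ):ℝ) ≤ (x:ℝ) := by
          rw [Nat.cast_natAbs]
          exact_mod_cast (show |y| ≤ x by rw [abs_of_pos hypos]; omega)
        have hwaR : ((w.natAbs:ℕ):ℝ) ≤ |(u:ℝ)| := by
          have h1 : |w| ≤ |u| := by
            rw [hw, abs_mul, abs_two]; linarith [abs_nonneg w]
          rw [Nat.cast_natAbs]
          exact_mod_cast h1
        calc ((rad (5242880 * y.natAbs^22 * ℓ * w.natAbs^2) : ℕ) : ℝ)
            ≤ ((5242880 * y.natAbs * ℓ * w.natAbs : ℕ) : ℝ) := by exact_mod_cast hradle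
          _ = (5242880:ℝ) * (ℓ:ℝ) * ((y.natAbs:ℕ):ℝ) * ((w.natAbs:ℕ):ℝ) := by
              push_cast; ring
          _ ≤ 2^26 * X * (x:ℝ) * |(u:ℝ)| := by
              refine mul_le_mul (mul_le_mul (mul_le_mul (by norm_num) hlX
                (Nat.cast_nonneg ℓ) (by norm_num)) hyaR (Nat.cast_nonneg _)
                (mul_nonneg (by norm_num) (by linarith))) hwaR (Nat.cast_nonneg _) ?_
              exact mul_nonneg (mul_nonneg (by norm_num) (by linarith)) (by linarith)
      have habs2 : ((w:ℝ))^2 ≤ C * ((rad (5242880 * y.natAbs^22 * ℓ * w.natAbs^2) : ℕ) : ℝ)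
          ^ ((3:ℝ)/2) := by
        rcases heqw with hww | hww
        · have habc1 := hABC (5242880*y^22) ((ℓ:ℤ)) (w^2) ha0 (ne_of_gt hlpos) hc0 hcop
            (by linarith)
          rw [hexp, hNabs] at habc1
          have hcast : ((|w^2| : ℤ):ℝ) = ((w:ℝ))^2 := by
            rw [abs_of_nonneg (sq_nonneg w)]; push_cast; ring
          rw [hcast] at habc1; exact habc1
        · have habc1 := hABC (5242880*y^22) (-(ℓ:ℤ)) (w^2) ha0
            (neg_ne_zero.mpr (ne_of_gt hlpos)) hc0 hcop.neg_right (by linarith)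
          rw [show 5242880*y^22 * -(ℓ:ℤ) * w^2 = -(5242880*y^22 * (ℓ:ℤ) * w^2) by ring,
            Int.natAbs_neg, hexp, hNabs] at habc1
          have hcast : ((|w^2| : ℤ):ℝ) = ((w:ℝ))^2 := by
            rw [abs_of_nonneg (sq_nonneg w)]; push_cast; ring
          rw [hcast] at habc1; exact habc1
      have habs_real : |(u:ℝ)|^2 ≤ 4 * (C * ((rad (5242880 * y.natAbs^22 * ℓ * w.natAbs^2) : ℕ) : ℝ) ^ ((3:ℝ)/2)) := by
        have hu2w : (u:ℝ) = 2*(w:ℝ) := by exact_mod_cast hw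
        have h42 : |(u:ℝ)|^2 = 4*((w:ℝ))^2 := by rw [sq_abs, hu2w]; ring
        linarith
      exact real_calc hC hX hx1 hu_lo hu_hi (Nat.cast_nonneg _) hrad_real habs_real
    · -- x odd
      have h2x : ¬ (2:ℤ) ∣ 5*x^22 := by
        intro h
        rcases (Int.prime_two.dvd_mul).mp h with h'|h'
        · norm_num at h'
        · obtain ⟨k, hk⟩ := Int.prime_two.dvd_of_dvd_pow h'
          exact (Int.not_odd_iff_even.mpr ⟨k, by omega⟩) hod
      have hL5x : ¬ (ℓ:ℤ) ∣ 5*x^22 := by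
        intro h
        rcases hLp.dvd_mul.mp h with h'|h'
        · have h5 : ℓ ∣ 5 := by exact_mod_cast h'
          exact hne5 ((Nat.prime_dvd_prime_iff_eq hp (by norm_num)).mp h5)
        · exact hLx (hLp.dvd_of_dvd_pow h')
      have hcop : IsCoprime (5*x^22) (4*(ℓ:ℤ)) := by
        have c2 : IsCoprime (2:ℤ) (5*x^22) :=
          (Prime.coprime_iff_not_dvd Int.prime_two).mpr h2x
        have cL : IsCoprime ((ℓ:ℤ)) (5*x^22) :=
          (Prime.coprime_iff_not_dvd hLp).mpr hL5x
        have h4 : IsCoprime ((2*2)*(ℓ:ℤ)) (5*x^22) :=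
          IsCoprime.mul_left (c2.mul_left c2) cL
        rw [show ((2*2)*(ℓ:ℤ)) = 4*(ℓ:ℤ) by ring] at h4
        exact h4.symm
      have ha0 : (5*x^22:ℤ) ≠ 0 := by positivity
      have hb0 : (4*(ℓ:ℤ)) ≠ 0 := by positivity
      have hc0 : (u^2:ℤ) ≠ 0 := pow_ne_zero 2 hu0
      have hxa0 : x.natAbs ≠ 0 := by simp [Int.natAbs_ne_zero]; omega
      have hua0 : u.natAbs ≠ 0 := by simp [Int.natAbs_ne_zero]; exact hu0
      have hl0 : ℓ ≠ 0 := hp.ne_zero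
      have hNabs : (5*x^22 * (4*(ℓ:ℤ)) * u^2).natAbs
          = 5*x.natAbs^22*(4*ℓ)*u.natAbs^2 := by
        simp [Int.natAbs_mul, Int.natAbs_pow]
      have hradle : rad (5*x.natAbs^22*(4*ℓ)*u.natAbs^2) ≤ 5*x.natAbs*(4*ℓ)*u.natAbs := by
        have h1 := rad_mul_le (mul_ne_zero (mul_ne_zero (by norm_num : (5:ℕ) ≠ 0)
          (pow_ne_zero 22 hxa0)) (by omega : 4*ℓ ≠ 0)) (pow_ne_zero 2 hua0)
        have h2 := rad_mul_le (mul_ne_zero (by norm_num : (5:ℕ) ≠ 0)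
          (pow_ne_zero 22 hxa0)) (by omega : 4*ℓ ≠ 0)
        have h3 := rad_mul_le (by norm_num : (5:ℕ) ≠ 0) (pow_ne_zero 22 hxa0)
        have h4 : rad (x.natAbs^22) = rad x.natAbs := rad_pow _ 22 (by norm_num)
        have h5 : rad (u.natAbs^2) = rad u.natAbs := rad_pow _ 2 (by norm_num)
        have h6 : rad x.natAbs ≤ x.natAbs := rad_le hxa0
        have h7 : rad u.natAbs ≤ u.natAbs := rad_le hua0
        have h8 : rad 5 ≤ 5 := rad_le (by norm_num : (5:ℕ) ≠ 0)
        have h9 : rad (4*ℓ) ≤ 4*ℓ := rad_le (by omega : 4*ℓ ≠ 0)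
        calc rad (5*x.natAbs^22*(4*ℓ)*u.natAbs^2)
            ≤ rad (5*x.natAbs^22*(4*ℓ)) * rad (u.natAbs^2) := h1
          _ ≤ (rad (5*x.natAbs^22) * rad (4*ℓ)) * rad (u.natAbs^2) :=
              Nat.mul_le_mul h2 le_rfl
          _ ≤ ((rad 5 * rad (x.natAbs^22)) * rad (4*ℓ)) * rad (u.natAbs^2) :=
              Nat.mul_le_mul (Nat.mul_le_mul h3 le_rfl) le_rfl
          _ = ((rad 5 * rad x.natAbs) * rad (4*ℓ)) * rad u.natAbs := by rw [h4, h5]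
          _ ≤ ((5 * x.natAbs) * (4*ℓ)) * u.natAbs :=
              Nat.mul_le_mul (Nat.mul_le_mul (Nat.mul_le_mul h8 h6) h9) h7
          _ = 5*x.natAbs*(4*ℓ)*u.natAbs := by ring
      have hxaR : ((x.natAbs:ℕ):ℝ) = (x:ℝ) := by
        rw [Nat.cast_natAbs]
        exact_mod_cast abs_of_pos hxpos
      have huaR : ((u.natAbs:ℕ):ℝ) = |(u:ℝ)| := by
        rw [Nat.cast_natAbs, Int.cast_abs]
      have hrad_real : ((rad (5*x.natAbs^22*(4*ℓ)*u.natAbs^2) : ℕ) : ℝ)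
          ≤ 2^26 * X * (x:ℝ) * |(u:ℝ)| := by
        calc ((rad (5*x.natAbs^22*(4*ℓ)*u.natAbs^2) : ℕ) : ℝ)
            ≤ ((5*x.natAbs*(4*ℓ)*u.natAbs : ℕ) : ℝ) := by exact_mod_cast hradle
          _ = (20:ℝ) * (ℓ:ℝ) * ((x.natAbs:ℕ):ℝ) * ((u.natAbs:ℕ):ℝ) := by
              push_cast; ring
          _ = (20:ℝ) * (ℓ:ℝ) * (x:ℝ) * |(u:ℝ)| := by rw [hxaR, huaR]
          _ ≤ 2^26 * X * (x:ℝ) * |(u:ℝ)| := by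
              refine mul_le_mul (mul_le_mul (mul_le_mul (by norm_num) hlX
                (Nat.cast_nonneg ℓ) (by norm_num)) le_rfl (by linarith)
                (mul_nonneg (by norm_num) (by linarith))) le_rfl (by linarith) ?_
              exact mul_nonneg (mul_nonneg (by norm_num) (by linarith)) (by linarith)
      have habs2 : ((u:ℝ))^2 ≤ C * ((rad (5*x.natAbs^22*(4*ℓ)*u.natAbs^2) : ℕ) : ℝ)
          ^ ((3:ℝ)/2) := by
        have hcast : ((|u^2| : ℤ):ℝ) = ((u:ℝ))^2 := by
          rw [abs_of_nonneg (sq_nonneg u)]; push_cast; ring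
        rcases heq with hww | hww
        · have habc1 := hABC (5*x^22) (4*(ℓ:ℤ)) (u^2) ha0 hb0 hc0 hcop (by linarith)
          rw [hexp, hNabs, hcast] at habc1; exact habc1
        · have habc1 := hABC (5*x^22) (-(4*(ℓ:ℤ))) (u^2) ha0 (neg_ne_zero.mpr hb0) hc0
            hcop.neg_right (by linarith)
          rw [show 5*x^22 * -(4*(ℓ:ℤ)) * u^2 = -(5*x^22 * (4*(ℓ:ℤ)) * u^2) by ring,
            Int.natAbs_neg, hexp, hNabs, hcast] at habc1; exact habc1
      have habs_real : |(u:ℝ)|^2 ≤ 4 * (C * ((rad (5*x.natAbs^22*(4*ℓ)*u.natAbs^2) : ℕ) : ℝ)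
          ^ ((3:ℝ)/2)) := by
        have hpos : (0:ℝ) ≤ C * ((rad (5*x.natAbs^22*(4*ℓ)*u.natAbs^2) : ℕ) : ℝ)
            ^ ((3:ℝ)/2) := by positivity
        rw [sq_abs]
        linarith
      exact real_calc hC hX hx1 hu_lo hu_hi (Nat.cast_nonneg _) hrad_real habs_real


set_option maxHeartbeats 2000000 in
lemma part_sum_bound (C₂ X : ℝ) (hC₂1 : 1 ≤ C₂) (hX : 2 ≤ X) :
    ∑ x ∈ Finset.Icc (1:ℤ) ⌊C₂ * X ^ ((3:ℝ)/8)⌋,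
      (Real.sqrt (5*((x:ℝ))^22 + 4*X) - Real.sqrt (5*((x:ℝ))^22 - 4*X) + 1)
    ≤ (C₂ + 12010) * X ^ ((6:ℝ)/11) := by
  have hXpos : (0:ℝ) < X := by linarith
  have hX1 : (1:ℝ) ≤ X := by linarith
  set M : ℤ := ⌊C₂ * X ^ ((3:ℝ)/8)⌋ with hM
  set x₀ : ℤ := ⌈X ^ ((1:ℝ)/22)⌉ with hx₀
  have hx₀R : X ^ ((1:ℝ)/22) ≤ (x₀:ℝ) := Int.le_ceil _
  have hXr1 : (1:ℝ) ≤ X ^ ((1:ℝ)/22) := Real.one_le_rpow hX1 (by norm_num)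
  have hx₀1 : (1:ℤ) ≤ x₀ := by exact_mod_cast le_trans hXr1 hx₀R
  have hx₀pos : (0:ℝ) < (x₀:ℝ) := by exact_mod_cast lt_of_lt_of_le zero_lt_one hx₀1
  have hx₀le : (x₀:ℝ) ≤ 2 * X ^ ((1:ℝ)/22) := by
    have h1 : ((⌈X ^ ((1:ℝ)/22)⌉ : ℤ) : ℝ) < X ^ ((1:ℝ)/22) + 1 := Int.ceil_lt_add_one _
    rw [hx₀]; linarith
  have hXpow22 : (X ^ ((1:ℝ)/22)) ^ (22:ℕ) = X := by
    rw [← rpow_natCast (X ^ ((1:ℝ)/22)) 22, ← rpow_mul hXpos.le]; norm_num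
  -- split
  have hsplit : ∑ x ∈ Finset.Icc (1:ℤ) M,
        (Real.sqrt (5*((x:ℝ))^22 + 4*X) - Real.sqrt (5*((x:ℝ))^22 - 4*X) + 1)
      ≤ (∑ x ∈ Finset.Icc (1:ℤ) x₀,
          (Real.sqrt (5*((x:ℝ))^22 + 4*X) - Real.sqrt (5*((x:ℝ))^22 - 4*X) + 1))
        + ∑ x ∈ Finset.Ioc x₀ M,
          (Real.sqrt (5*((x:ℝ))^22 + 4*X) - Real.sqrt (5*((x:ℝ))^22 - 4*X) + 1) := by
    have hsub2 : Finset.Icc (1:ℤ) M ⊆ Finset.Icc (1:ℤ) x₀ ∪ Finset.Ioc x₀ M := by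
      intro z hz
      simp only [Finset.mem_Icc, Finset.mem_union, Finset.mem_Ioc] at *
      omega
    have hdisj : Disjoint (Finset.Icc (1:ℤ) x₀) (Finset.Ioc x₀ M) := by
      rw [Finset.disjoint_left]
      intro z hz1 hz2
      simp only [Finset.mem_Icc, Finset.mem_Ioc] at *
      omega
    calc ∑ x ∈ Finset.Icc (1:ℤ) M,
          (Real.sqrt (5*((x:ℝ))^22 + 4*X) - Real.sqrt (5*((x:ℝ))^22 - 4*X) + 1)
        ≤ ∑ x ∈ (Finset.Icc (1:ℤ) x₀ ∪ Finset.Ioc x₀ M),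
            (Real.sqrt (5*((x:ℝ))^22 + 4*X) - Real.sqrt (5*((x:ℝ))^22 - 4*X) + 1) := by
          refine Finset.sum_le_sum_of_subset_of_nonneg hsub2 fun z _ _ => ?_
          have : Real.sqrt (5*((z:ℝ))^22 - 4*X) ≤ Real.sqrt (5*((z:ℝ))^22 + 4*X) :=
            Real.sqrt_le_sqrt (by linarith)
          linarith
      _ = _ := Finset.sum_union hdisj
  -- part 1
  have hpart1 : ∑ x ∈ Finset.Icc (1:ℤ) x₀,
        (Real.sqrt (5*((x:ℝ))^22 + 4*X) - Real.sqrt (5*((x:ℝ))^22 - 4*X) + 1)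
      ≤ 12002 * X ^ ((6:ℝ)/11) := by
    have hsX : (1:ℝ) ≤ Real.sqrt X := by
      rw [show (1:ℝ) = Real.sqrt 1 by simp]
      exact Real.sqrt_le_sqrt hX1
    have hterm : ∀ z ∈ Finset.Icc (1:ℤ) x₀,
        Real.sqrt (5*((z:ℝ))^22 + 4*X) - Real.sqrt (5*((z:ℝ))^22 - 4*X) + 1
          ≤ 6001 * Real.sqrt X := by
      intro z hz
      simp only [Finset.mem_Icc] at hz
      have hz0R : (0:ℝ) ≤ (z:ℝ) := by exact_mod_cast (by omega : (0:ℤ) ≤ z)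
      have hzR : (z:ℝ) ≤ (x₀:ℝ) := by exact_mod_cast hz.2
      have hz22 : ((z:ℝ))^22 ≤ 2^22 * X := by
        calc ((z:ℝ))^22 ≤ (2*X ^ ((1:ℝ)/22))^22 :=
            pow_le_pow_left₀ hz0R (le_trans hzR hx₀le) 22
          _ = 2^22 * (X ^ ((1:ℝ)/22))^(22:ℕ) := by ring
          _ = 2^22 * X := by rw [hXpow22]
      have hBle : 5*((z:ℝ))^22 + 4*X ≤ 2^25 * X := by nlinarith
      have hsqB : Real.sqrt (5*((z:ℝ))^22 + 4*X) ≤ 6000 * Real.sqrt X := by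
        calc Real.sqrt (5*((z:ℝ))^22 + 4*X) ≤ Real.sqrt (2^25 * X) :=
            Real.sqrt_le_sqrt hBle
          _ = Real.sqrt (2^25) * Real.sqrt X := Real.sqrt_mul (by norm_num) X
          _ ≤ 6000 * Real.sqrt X := by
              have h6 : Real.sqrt (2^25) ≤ 6000 := by
                rw [show (6000:ℝ) = Real.sqrt (6000^2) by
                  rw [Real.sqrt_sq]; norm_num]
                exact Real.sqrt_le_sqrt (by norm_num)
              nlinarith [Real.sqrt_nonneg X]
      have hsqA : 0 ≤ Real.sqrt (5*((z:ℝ))^22 - 4*X) := Real.sqrt_nonneg _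
      linarith
    have hcard : ((Finset.Icc (1:ℤ) x₀).card : ℝ) ≤ 2 * X ^ ((1:ℝ)/22) := by
      rw [Int.card_Icc, show x₀ + 1 - 1 = x₀ by ring]
      have he : ((x₀.toNat : ℕ) : ℝ) = ((x₀:ℤ):ℝ) := by
        exact_mod_cast Int.toNat_of_nonneg (by omega)
      rw [he]; linarith
    calc ∑ x ∈ Finset.Icc (1:ℤ) x₀,
          (Real.sqrt (5*((x:ℝ))^22 + 4*X) - Real.sqrt (5*((x:ℝ))^22 - 4*X) + 1)
        ≤ (Finset.Icc (1:ℤ) x₀).card • (6001 * Real.sqrt X) :=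
          Finset.sum_le_card_nsmul _ _ _ hterm
      _ = ((Finset.Icc (1:ℤ) x₀).card : ℝ) * (6001 * Real.sqrt X) := nsmul_eq_mul _ _
      _ ≤ (2 * X ^ ((1:ℝ)/22)) * (6001 * Real.sqrt X) := by
          have h0 : (0:ℝ) ≤ 6001 * Real.sqrt X := by positivity
          exact mul_le_mul_of_nonneg_right hcard h0
      _ = 12002 * (X ^ ((1:ℝ)/22) * Real.sqrt X) := by ring
      _ ≤ 12002 * X ^ ((6:ℝ)/11) := by
          have h : X ^ ((1:ℝ)/22) * Real.sqrt X = X ^ ((6:ℝ)/11) := by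
            rw [Real.sqrt_eq_rpow, ← rpow_add hXpos]; norm_num
          rw [h]
  -- part 2
  have hpart2 : ∑ x ∈ Finset.Ioc x₀ M,
        (Real.sqrt (5*((x:ℝ))^22 + 4*X) - Real.sqrt (5*((x:ℝ))^22 - 4*X) + 1)
      ≤ 8 * X ^ ((6:ℝ)/11) + C₂ * X ^ ((3:ℝ)/8) := by
    have hterm : ∀ z ∈ Finset.Ioc x₀ M,
        Real.sqrt (5*((z:ℝ))^22 + 4*X) - Real.sqrt (5*((z:ℝ))^22 - 4*X) + 1
          ≤ (8*X/((x₀:ℝ))^9) * (1/((z:ℝ))^2) + 1 := by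
      intro z hz
      simp only [Finset.mem_Ioc] at hz
      have hzx₀ : (x₀:ℝ) ≤ (z:ℝ) := by exact_mod_cast hz.1.le
      have hz1 : (1:ℝ) ≤ (z:ℝ) := by exact_mod_cast (by omega : (1:ℤ) ≤ z)
      have hzpos : (0:ℝ) < (z:ℝ) := by linarith
      have hzX : X ≤ ((z:ℝ))^22 := by
        calc X = (X ^ ((1:ℝ)/22))^(22:ℕ) := hXpow22.symm
          _ ≤ ((x₀:ℝ))^22 := pow_le_pow_left₀ (rpow_nonneg hXpos.le _) hx₀R 22
          _ ≤ ((z:ℝ))^22 := pow_le_pow_left₀ hx₀pos.le hzx₀ 22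
      have hA0 : ((z:ℝ))^22 ≤ 5*((z:ℝ))^22 - 4*X := by linarith
      have hA0' : (0:ℝ) ≤ 5*((z:ℝ))^22 - 4*X := le_trans (by positivity) hA0
      have hsA : ((z:ℝ))^11 ≤ Real.sqrt (5*((z:ℝ))^22 - 4*X) := by
        rw [show ((z:ℝ))^11 = Real.sqrt ((((z:ℝ))^11)^2) from
          (Real.sqrt_sq (by positivity)).symm]
        exact Real.sqrt_le_sqrt (by nlinarith)
      have hd0 : (0:ℝ) ≤ 8*X/((z:ℝ))^11 := by positivity
      have hdmul : ((z:ℝ))^11 * (8*X/((z:ℝ))^11) = 8*X :=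
        mul_div_cancel₀ _ (by positivity)
      have h1' : 8*X ≤ Real.sqrt (5*((z:ℝ))^22 - 4*X) * (8*X/((z:ℝ))^11) :=
        calc 8*X = ((z:ℝ))^11 * (8*X/((z:ℝ))^11) := hdmul.symm
          _ ≤ Real.sqrt (5*((z:ℝ))^22 - 4*X) * (8*X/((z:ℝ))^11) :=
            mul_le_mul_of_nonneg_right hsA hd0
      have hsB : Real.sqrt (5*((z:ℝ))^22 + 4*X)
          ≤ Real.sqrt (5*((z:ℝ))^22 - 4*X) + 8*X/((z:ℝ))^11 := by
        rw [show Real.sqrt (5*((z:ℝ))^22 - 4*X) + 8*X/((z:ℝ))^11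
            = Real.sqrt ((Real.sqrt (5*((z:ℝ))^22 - 4*X) + 8*X/((z:ℝ))^11)^2) from
          (Real.sqrt_sq (by positivity)).symm]
        apply Real.sqrt_le_sqrt
        have hsq : (Real.sqrt (5*((z:ℝ))^22 - 4*X))^2 = 5*((z:ℝ))^22 - 4*X :=
          Real.sq_sqrt hA0'
        nlinarith [sq_nonneg (8*X/((z:ℝ))^11), h1', hsq]
      have hdle : 8*X/((z:ℝ))^11 ≤ (8*X/((x₀:ℝ))^9) * (1/((z:ℝ))^2) := by
        have hrw : (8*X/((x₀:ℝ))^9) * (1/((z:ℝ))^2) = 8*X/(((x₀:ℝ))^9*((z:ℝ))^2) := by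
          ring
        rw [hrw]
        have h9 : ((x₀:ℝ))^9*((z:ℝ))^2 ≤ ((z:ℝ))^11 := by
          have h99 : ((x₀:ℝ))^9 ≤ ((z:ℝ))^9 := pow_le_pow_left₀ hx₀pos.le hzx₀ 9
          nlinarith [sq_nonneg (z:ℝ), pow_pos hzpos 9, pow_pos hzpos 2]
        exact div_le_div_of_nonneg_left (by positivity) (by positivity) h9
      have hsqA : 0 ≤ Real.sqrt (5*((z:ℝ))^22 - 4*X) := Real.sqrt_nonneg _
      linarith
    have hcard2 : ((Finset.Ioc x₀ M).card : ℝ) ≤ C₂ * X ^ ((3:ℝ)/8) := by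
      have hC20 : (0:ℝ) ≤ C₂ * X ^ ((3:ℝ)/8) :=
        mul_nonneg (by linarith) (rpow_nonneg hXpos.le _)
      rw [Int.card_Ioc]
      rcases le_or_gt (M - x₀) 0 with h|h
      · rw [Int.toNat_of_nonpos h, Nat.cast_zero]; exact hC20
      · have he : (((M - x₀).toNat : ℕ) : ℝ) = ((M - x₀ : ℤ) : ℝ) := by
          exact_mod_cast Int.toNat_of_nonneg h.le
        rw [he]
        have hMle : ((M:ℤ):ℝ) ≤ C₂ * X ^ ((3:ℝ)/8) := Int.floor_le _
        push_cast
        linarith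
    have hsum := sum_inv_sq_le x₀ M hx₀1
    have hfac : (0:ℝ) ≤ 8*X/((x₀:ℝ))^9 := by positivity
    calc ∑ x ∈ Finset.Ioc x₀ M,
          (Real.sqrt (5*((x:ℝ))^22 + 4*X) - Real.sqrt (5*((x:ℝ))^22 - 4*X) + 1)
        ≤ ∑ z ∈ Finset.Ioc x₀ M, ((8*X/((x₀:ℝ))^9) * (1/((z:ℝ))^2) + 1) :=
          Finset.sum_le_sum hterm
      _ = (8*X/((x₀:ℝ))^9) * (∑ z ∈ Finset.Ioc x₀ M, 1/((z:ℝ))^2)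
          + ((Finset.Ioc x₀ M).card : ℝ) := by
          rw [Finset.sum_add_distrib, ← Finset.mul_sum, Finset.sum_const,
            nsmul_eq_mul, mul_one]
      _ ≤ (8*X/((x₀:ℝ))^9) * (1/(x₀:ℝ)) + C₂ * X ^ ((3:ℝ)/8) := by
          have h1 := mul_le_mul_of_nonneg_left hsum hfac
          linarith
      _ ≤ 8 * X ^ ((6:ℝ)/11) + C₂ * X ^ ((3:ℝ)/8) := by
          have heq10 : (8*X/((x₀:ℝ))^9) * (1/(x₀:ℝ)) = 8*X/((x₀:ℝ))^10 := by
            ring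
          have h10a : X ^ ((10:ℝ)/22) = (X ^ ((1:ℝ)/22))^(10:ℕ) := by
            rw [← rpow_natCast (X ^ ((1:ℝ)/22)) 10, ← rpow_mul hXpos.le]; norm_num
          have h10 : X ^ ((10:ℝ)/22) ≤ ((x₀:ℝ))^10 := by
            rw [h10a]
            exact pow_le_pow_left₀ (rpow_nonneg hXpos.le _) hx₀R 10
          have h2 : 8*X/((x₀:ℝ))^10 ≤ 8*X / X ^ ((10:ℝ)/22) :=
            div_le_div_of_nonneg_left (by positivity) (by positivity) h10
          have h3 : 8*X / X ^ ((10:ℝ)/22) = 8 * X ^ ((6:ℝ)/11) := by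
            have hXeq : X ^ ((6:ℝ)/11) = X ^ ((1:ℝ) - 10/22) := by norm_num
            rw [hXeq, Real.rpow_sub hXpos, rpow_one]
            ring
          rw [heq10]
          linarith
  -- assemble
  have hX38 : X ^ ((3:ℝ)/8) ≤ X ^ ((6:ℝ)/11) :=
    rpow_le_rpow_of_exponent_le hX1 (by norm_num)
  have hC2mul : C₂ * X ^ ((3:ℝ)/8) ≤ C₂ * X ^ ((6:ℝ)/11) :=
    mul_le_mul_of_nonneg_left hX38 (by linarith)
  have hfin : ∑ x ∈ Finset.Icc (1:ℤ) M,
      (Real.sqrt (5*((x:ℝ))^22 + 4*X) - Real.sqrt (5*((x:ℝ))^22 - 4*X) + 1)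
      ≤ (C₂ + 12010) * X ^ ((6:ℝ)/11) := by
    have : (C₂ + 12010) * X ^ ((6:ℝ)/11)
        = 12002 * X ^ ((6:ℝ)/11) + (8 * X ^ ((6:ℝ)/11) + C₂ * X ^ ((6:ℝ)/11)) := by ring
    rw [this]
    linarith
  exact hfin

set_option maxHeartbeats 2000000 in
theorem abc_implies_A4_bound (habc : ABCConjecture) :
    ∃ C : ℝ, 0 < C ∧ ∀ X : ℝ, 2 ≤ X →
      (Set.ncard {ℓ : ℕ | ℓ.Prime ∧ (ℓ : ℝ) ≤ X ∧
          ∃ x u : ℤ, 1 ≤ x ∧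
            (u ^ 2 = 5 * x ^ 22 + 4 * (ℓ : ℤ) ∨ u ^ 2 = 5 * x ^ 22 - 4 * (ℓ : ℤ))} : ℝ)
        ≤ C * X ^ ((6 : ℝ) / 11) := by
  obtain ⟨C₂, hC₂1, hkey⟩ := key habc
  refine ⟨C₂ + 12012, by linarith, ?_⟩
  intro X hX
  have hXpos : (0:ℝ) < X := by linarith
  have hX1 : (1:ℝ) ≤ X := by linarith
  have hX611 : (1:ℝ) ≤ X ^ ((6:ℝ)/11) := Real.one_le_rpow hX1 (by norm_num)
  set S : Set ℕ := {ℓ : ℕ | ℓ.Prime ∧ (ℓ : ℝ) ≤ X ∧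
      ∃ x u : ℤ, 1 ≤ x ∧
        (u ^ 2 = 5 * x ^ 22 + 4 * (ℓ : ℤ) ∨ u ^ 2 = 5 * x ^ 22 - 4 * (ℓ : ℤ))} with hS
  set S' : Set ℕ := {ℓ : ℕ | ℓ.Prime ∧ ℓ ≠ 2 ∧ ℓ ≠ 5 ∧ (ℓ : ℝ) ≤ X ∧
      ∃ p : ℤ × ℤ, 1 ≤ p.1 ∧ 0 ≤ p.2 ∧
        (p.2 ^ 2 = 5 * p.1 ^ 22 + 4 * (ℓ : ℤ) ∨ p.2 ^ 2 = 5 * p.1 ^ 22 - 4 * (ℓ : ℤ))} with hS'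
  set M : ℤ := ⌊C₂ * X ^ ((3:ℝ)/8)⌋ with hM
  set F : Finset (ℤ×ℤ) := (Finset.Icc 1 M).biUnion
    (fun x => (Finset.Icc ⌈Real.sqrt (5*((x:ℝ))^22 - 4*X)⌉
      ⌊Real.sqrt (5*((x:ℝ))^22 + 4*X)⌋).image (fun v => (x, v))) with hF
  classical
  set f : ℕ → ℤ×ℤ := fun ℓ =>
    if h : ∃ p : ℤ×ℤ, 1 ≤ p.1 ∧ 0 ≤ p.2 ∧
        (p.2 ^ 2 = 5 * p.1 ^ 22 + 4 * (ℓ:ℤ) ∨ p.2 ^ 2 = 5 * p.1 ^ 22 - 4 * (ℓ:ℤ))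
    then h.choose else (0,0) with hf
  have hfspec : ∀ ℓ ∈ S', 1 ≤ (f ℓ).1 ∧ 0 ≤ (f ℓ).2 ∧
      ((f ℓ).2 ^ 2 = 5 * (f ℓ).1 ^ 22 + 4 * (ℓ:ℤ) ∨
       (f ℓ).2 ^ 2 = 5 * (f ℓ).1 ^ 22 - 4 * (ℓ:ℤ)) := by
    intro ℓ hℓ
    obtain ⟨-, -, -, -, hex⟩ := hℓ
    rw [hf]
    simp only [dif_pos hex]
    exact hex.choose_spec
  have hinj : Set.InjOn f S' := by
    intro ℓ₁ h₁ ℓ₂ h₂ hfe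
    obtain ⟨-, -, he₁⟩ := hfspec ℓ₁ h₁
    obtain ⟨-, -, he₂⟩ := hfspec ℓ₂ h₂
    rw [hfe] at he₁
    have hp₁ : (0:ℤ) < (ℓ₁:ℤ) := by exact_mod_cast h₁.1.pos
    have hp₂ : (0:ℤ) < (ℓ₂:ℤ) := by exact_mod_cast h₂.1.pos
    have : (ℓ₁:ℤ) = (ℓ₂:ℤ) := by
      rcases he₁ with h1|h1 <;> rcases he₂ with h2|h2 <;> linarith
    exact_mod_cast this
  have himg : f '' S' ⊆ ↑F := by
    rintro - ⟨ℓ, hℓ, rfl⟩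
    obtain ⟨hx1, hu0, heq⟩ := hfspec ℓ hℓ
    obtain ⟨hprime, hne2, hne5, hlX, -⟩ := hℓ
    set x := (f ℓ).1
    set u := (f ℓ).2
    have hxR1 : (1:ℝ) ≤ (x:ℝ) := by exact_mod_cast hx1
    have hlR : (0:ℝ) ≤ (ℓ:ℝ) := Nat.cast_nonneg ℓ
    have huR : (0:ℝ) ≤ (u:ℝ) := by exact_mod_cast hu0
    have hu2A : 5*((x:ℝ))^22 - 4*X ≤ ((u:ℝ))^2 := by
      rcases heq with h|h
      · have h' : ((u:ℝ))^2 = 5*((x:ℝ))^22 + 4*(ℓ:ℝ) := by exact_mod_cast h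
        rw [h']; linarith
      · have h' : ((u:ℝ))^2 = 5*((x:ℝ))^22 - 4*(ℓ:ℝ) := by exact_mod_cast h
        rw [h']; linarith
    have hu2B : ((u:ℝ))^2 ≤ 5*((x:ℝ))^22 + 4*X := by
      rcases heq with h|h
      · have h' : ((u:ℝ))^2 = 5*((x:ℝ))^22 + 4*(ℓ:ℝ) := by exact_mod_cast h
        rw [h']; linarith
      · have h' : ((u:ℝ))^2 = 5*((x:ℝ))^22 - 4*(ℓ:ℝ) := by exact_mod_cast h
        rw [h']; linarith
    have hxM : x ≤ M := by
      rw [hM]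
      exact Int.le_floor.mpr (hkey X hX ℓ hprime hne2 hne5 hlX x u hx1 heq)
    rw [hF]
    simp only [Finset.coe_biUnion, Set.mem_iUnion, Finset.mem_coe, Finset.mem_image,
      Finset.mem_Icc]
    refine ⟨x, ⟨hx1, hxM⟩, u, ⟨?_, ?_⟩, rfl⟩
    · apply Int.ceil_le.mpr
      calc Real.sqrt (5*((x:ℝ))^22 - 4*X) ≤ Real.sqrt (((u:ℝ))^2) :=
          Real.sqrt_le_sqrt hu2A
        _ = (u:ℝ) := by rw [Real.sqrt_sq huR]
    · apply Int.le_floor.mpr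
      calc (u:ℝ) = Real.sqrt (((u:ℝ))^2) := by rw [Real.sqrt_sq huR]
        _ ≤ Real.sqrt (5*((x:ℝ))^22 + 4*X) := Real.sqrt_le_sqrt hu2B
  have hS'fin : S'.Finite :=
    Set.Finite.of_finite_image (F.finite_toSet.subset himg) hinj
  have hsub : S ⊆ insert 2 (insert 5 S') := by
    intro ℓ hℓ
    obtain ⟨hp, hlX, x, u, hx1, heq⟩ := hℓ
    by_cases h2 : ℓ = 2
    · exact Set.mem_insert_iff.mpr (Or.inl h2)
    by_cases h5 : ℓ = 5
    · exact Set.mem_insert_iff.mpr (Or.inr (Set.mem_insert_iff.mpr (Or.inl h5)))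
    refine Set.mem_insert_iff.mpr (Or.inr (Set.mem_insert_iff.mpr (Or.inr ?_)))
    refine ⟨hp, h2, h5, hlX, ⟨(x, |u|), hx1, abs_nonneg u, ?_⟩⟩
    simpa [sq_abs] using heq
  have hcard1 : (S.ncard : ℝ) ≤ (F.card : ℝ) + 2 := by
    have h1 : S.ncard ≤ (insert 2 (insert 5 S')).ncard :=
      Set.ncard_le_ncard hsub ((hS'fin.insert 5).insert 2)
    have h2 : (insert 2 (insert 5 S')).ncard ≤ (insert 5 S').ncard + 1 :=
      Set.ncard_insert_le 2 _
    have h3 : (insert 5 S').ncard ≤ S'.ncard + 1 := Set.ncard_insert_le 5 _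
    have h4 : S'.ncard ≤ F.card := by
      rw [← Set.ncard_image_of_injOn hinj, ← Set.ncard_coe_finset]
      exact Set.ncard_le_ncard himg F.finite_toSet
    have : S.ncard ≤ F.card + 2 := by omega
    exact_mod_cast this
  have hFsum : (F.card : ℝ) ≤ ∑ x ∈ Finset.Icc (1:ℤ) M,
      (Real.sqrt (5*((x:ℝ))^22 + 4*X) - Real.sqrt (5*((x:ℝ))^22 - 4*X) + 1) := by
    have h1 : F.card ≤ ∑ x ∈ Finset.Icc (1:ℤ) M,
        (Finset.Icc ⌈Real.sqrt (5*((x:ℝ))^22 - 4*X)⌉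
          ⌊Real.sqrt (5*((x:ℝ))^22 + 4*X)⌋).card := by
      rw [hF]
      refine le_trans (Finset.card_biUnion_le) ?_
      exact Finset.sum_le_sum fun x _ => Finset.card_image_le
    calc (F.card:ℝ) ≤ ((∑ x ∈ Finset.Icc (1:ℤ) M,
          (Finset.Icc ⌈Real.sqrt (5*((x:ℝ))^22 - 4*X)⌉
            ⌊Real.sqrt (5*((x:ℝ))^22 + 4*X)⌋).card : ℕ) : ℝ) := by
          exact_mod_cast h1
      _ = ∑ x ∈ Finset.Icc (1:ℤ) M,
          ((Finset.Icc ⌈Real.sqrt (5*((x:ℝ))^22 - 4*X)⌉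
            ⌊Real.sqrt (5*((x:ℝ))^22 + 4*X)⌋).card : ℝ) := by push_cast; rfl
      _ ≤ ∑ x ∈ Finset.Icc (1:ℤ) M,
          (Real.sqrt (5*((x:ℝ))^22 + 4*X) - Real.sqrt (5*((x:ℝ))^22 - 4*X) + 1) := by
          refine Finset.sum_le_sum fun x _ => ?_
          refine card_Icc_le_real _ _ _ _ (Int.le_ceil _) (Int.floor_le _) ?_
          exact Real.sqrt_le_sqrt (by linarith)
  have hbound := part_sum_bound C₂ X hC₂1 hX
  rw [← hM] at hbound
  calc (S.ncard:ℝ) ≤ (F.card:ℝ) + 2 := hcard1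
    _ ≤ ((C₂ + 12010) * X ^ ((6:ℝ)/11)) + 2 := by linarith
    _ ≤ (C₂ + 12012) * X ^ ((6:ℝ)/11) := by nlinarith
end

section
/- Assume the abc Conjecture. Then for every real η > 0 there exists a constant C > 0 such that the following holds: for all real X ≥ 2 and all integers x ≥ 1 and y, if x > X^(2/11) and 1 ≤ |x^11 − y^2| ≤ X, then x ≤ C · X^(4/9 + η). -/
open Real

theorem rad_le_of_subset {m n : ℕ} (h : m.primeFactors ⊆ n.primeFactors) (hn : n ≠ 0) :
    rad m ≤ n := by
  have h1 : rad m ∣ rad n := Finset.prod_dvd_prod_of_subset _ _ _ h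
  have h2 : rad n ∣ n := Nat.prod_primeFactors_dvd n
  exact Nat.le_of_dvd (Nat.pos_of_ne_zero hn) (h1.trans h2)

theorem subset_pf (x y k a' b' c' : ℤ) (hx : x ≠ 0) (hy : y ≠ 0) (hk : k ≠ 0)
    (hda : a' ∣ y ^ 2) (hdb : b' ∣ k) (hdc : c' ∣ x ^ 11) :
    ((a' * b' * c').natAbs).primeFactors ⊆ ((y * k * x).natAbs).primeFactors := by
  intro p hp
  rw [Nat.mem_primeFactors] at hp ⊢
  obtain ⟨hpp, hpd, -⟩ := hp
  have hpd' : (p : ℤ) ∣ a' * b' * c' := by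
    rwa [Int.natCast_dvd_natCast.symm, Int.dvd_natAbs] at hpd
  have hpz : Prime (p : ℤ) := Nat.prime_iff_prime_int.mp hpp
  refine ⟨hpp, ?_, ?_⟩
  · rw [← Int.natCast_dvd_natCast, Int.dvd_natAbs]
    rcases hpz.dvd_mul.mp hpd' with h | h
    · rcases hpz.dvd_mul.mp h with h | h
      · have : (p:ℤ) ∣ y ^ 2 := h.trans hda
        have : (p:ℤ) ∣ y := hpz.dvd_of_dvd_pow this
        exact Dvd.dvd.mul_right (Dvd.dvd.mul_right this k) x
      · have : (p:ℤ) ∣ k := h.trans hdb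
        exact Dvd.dvd.mul_right (Dvd.dvd.mul_left this y) x
    · have : (p:ℤ) ∣ x ^ 11 := h.trans hdc
      exact Dvd.dvd.mul_left (hpz.dvd_of_dvd_pow this) (y*k)
  · simp [Int.natAbs_mul, hx, hy, hk]

set_option maxHeartbeats 1000000 in
theorem abc_implies_x_bound_E2 (habc : ABCConjecture) :
    ∀ η : ℝ, 0 < η → ∃ C : ℝ, 0 < C ∧ ∀ X : ℝ, 2 ≤ X → ∀ x y : ℤ, 1 ≤ x →
      X ^ ((2 : ℝ) / 11) < (x : ℝ) →
      1 ≤ |x ^ 11 - y ^ 2| → ((|x ^ 11 - y ^ 2| : ℤ) : ℝ) ≤ X →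
      (x : ℝ) ≤ C * X ^ ((4 : ℝ) / 9 + η) := by
  intro η hη
  obtain ⟨ε, hεdef⟩ : ∃ ε : ℝ, ε = min (η/2) (1/4) := ⟨_, rfl⟩
  have hε : 0 < ε := hεdef ▸ lt_min (by linarith) (by norm_num)
  have hεη : ε ≤ η/2 := hεdef ▸ min_le_left _ _
  have hε4 : ε ≤ 1/4 := hεdef ▸ min_le_right _ _
  obtain ⟨C₀, hC₀, habc'⟩ := habc ε hε
  obtain ⟨C₁, hC₁def⟩ : ∃ C₁ : ℝ, C₁ = C₀ * (2:ℝ) ^ (1+ε) := ⟨_, rfl⟩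
  have hC₁ : 0 < C₁ := hC₁def ▸ mul_pos hC₀ (rpow_pos_of_pos two_pos _)
  refine ⟨max C₁ 1, lt_of_lt_of_le one_pos (le_max_right _ _), ?_⟩
  intro X hX x y hx hXx h1 hkX
  obtain ⟨k, hkdef⟩ : ∃ k : ℤ, k = x ^ 11 - y ^ 2 := ⟨_, rfl⟩
  rw [← hkdef] at h1 hkX
  have hX0 : (0:ℝ) < X := by linarith
  have hX1 : (1:ℝ) ≤ X := by linarith
  have hx0 : (0:ℝ) < (x:ℝ) := by exact_mod_cast hx
  have hx1 : (1:ℝ) ≤ (x:ℝ) := by exact_mod_cast hx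
  have hxz : x ≠ 0 := by positivity
  have hk0 : k ≠ 0 := by intro h; rw [h] at h1; simp at h1
  obtain ⟨u, hudef⟩ : ∃ u : ℝ, u = (x:ℝ) := ⟨_, rfl⟩
  rw [← hudef] at hXx hx0 hx1
  -- X < u^(11/2)
  have hXlt : X < u ^ ((11:ℝ)/2) := by
    have h2 : (X ^ ((2:ℝ)/11)) ^ ((11:ℝ)/2) < u ^ ((11:ℝ)/2) :=
      rpow_lt_rpow (rpow_nonneg hX0.le _) hXx (by norm_num)
    rwa [← rpow_mul hX0.le, show (2:ℝ)/11 * (11/2) = 1 by norm_num, rpow_one] at h2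
  have hu11 : u ^ (11:ℝ) = u ^ (11:ℕ) := by
    rw [← rpow_natCast u 11]; norm_num
  have h1152 : u ^ ((11:ℝ)/2) ≤ u ^ (11:ℕ) := by
    rw [← hu11]; exact rpow_le_rpow_of_exponent_le hx1 (by norm_num)
  have hkabs : ((|k| : ℤ) : ℝ) = |u ^ (11:ℕ) - (y:ℝ)^2| := by
    rw [hkdef]; push_cast; rw [← hudef]
  -- y ≠ 0
  have hy0 : y ≠ 0 := by
    intro hy
    have hk11 : ((|k| : ℤ) : ℝ) = u ^ (11:ℕ) := by
      rw [hkabs, hy]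
      push_cast
      rw [show ((0:ℝ))^2 = 0 by norm_num, sub_zero, abs_of_pos (pow_pos hx0 11)]
    rw [hk11] at hkX
    linarith
  -- key arithmetic facts about k
  have hkXr : |(k:ℝ)| ≤ X := by rw [← Int.cast_abs]; exact hkX
  have hky : (k:ℝ) = u ^ (11:ℕ) - (y:ℝ)^2 := by rw [hkdef]; push_cast; rw [← hudef]
  -- |y| ≤ 2 u^(11/2)
  have ht2 : (u ^ ((11:ℝ)/2))^2 = u ^ (11:ℕ) := by
    rw [← rpow_natCast (u ^ ((11:ℝ)/2)) 2, ← rpow_mul hx0.le]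
    norm_num [hu11]
  have htpos : 0 < u ^ ((11:ℝ)/2) := rpow_pos_of_pos hx0 _
  have hy2 : (y:ℝ)^2 ≤ 2 * u ^ (11:ℕ) := by
    have h4 : (k:ℝ) ≥ -X := (abs_le.mp hkXr).1
    linarith
  have hyle : |(y:ℝ)| ≤ 2 * u ^ ((11:ℝ)/2) := by
    nlinarith [abs_nonneg (y:ℝ), sq_abs (y:ℝ), htpos, ht2]
  -- set up abc application
  obtain ⟨a, hadef⟩ : ∃ a : ℤ, a = y ^ 2 := ⟨_, rfl⟩
  obtain ⟨g, hgdef⟩ : ∃ g : ℤ, g = (Int.gcd a k : ℤ) := ⟨_, rfl⟩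
  have ha : a ≠ 0 := hadef ▸ pow_ne_zero 2 hy0
  have hgn : 0 < Int.gcd a k := Int.gcd_pos_of_ne_zero_left k ha
  have hg0 : (0:ℤ) < g := hgdef ▸ Int.natCast_pos.mpr hgn
  have hga : g ∣ a := hgdef ▸ Int.gcd_dvd_left a k
  have hgb : g ∣ k := hgdef ▸ Int.gcd_dvd_right a k
  have hgc : g ∣ x ^ 11 := by
    have h5 : a + k = x ^ 11 := by rw [hadef, hkdef]; ring
    exact h5 ▸ dvd_add hga hgb
  obtain ⟨a', ha'def⟩ : ∃ a' : ℤ, a' = a / g := ⟨_, rfl⟩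
  obtain ⟨b', hb'def⟩ : ∃ b' : ℤ, b' = k / g := ⟨_, rfl⟩
  obtain ⟨c', hc'def⟩ : ∃ c' : ℤ, c' = x ^ 11 / g := ⟨_, rfl⟩
  have haa : g * a' = a := ha'def ▸ Int.mul_ediv_cancel' hga
  have hbb : g * b' = k := hb'def ▸ Int.mul_ediv_cancel' hgb
  have hcc : g * c' = x ^ 11 := hc'def ▸ Int.mul_ediv_cancel' hgc
  have ha' : a' ≠ 0 := by intro h; rw [h, mul_zero] at haa; exact ha haa.symm
  have hb' : b' ≠ 0 := by intro h; rw [h, mul_zero] at hbb; exact hk0 hbb.symm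
  have hc'0 : c' ≠ 0 := by
    intro h; rw [h, mul_zero] at hcc
    exact pow_ne_zero 11 hxz hcc.symm
  have hsum : a' + b' = c' := by
    have h6 : g * (a' + b') = g * c' := by
      rw [mul_add, haa, hbb, hcc, hadef, hkdef]; ring
    exact mul_left_cancel₀ hg0.ne' h6
  have hcop : IsCoprime a' b' := by
    rw [ha'def, hb'def, hgdef]
    exact Int.isCoprime_iff_gcd_eq_one.mpr (Int.gcd_div_gcd_div_gcd hgn)
  have hABC := habc' a' b' c' ha' hb' hc'0 hcop hsum
  -- bound the radical
  obtain ⟨R, hRdef⟩ : ∃ R : ℝ, R = (rad ((a' * b' * c').natAbs) : ℝ) := ⟨_, rfl⟩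
  rw [← hRdef] at hABC
  have hR0 : 0 ≤ R := by rw [hRdef]; positivity
  have hRle : R ≤ |(y:ℝ)| * |(k:ℝ)| * u := by
    have hda : a' ∣ y ^ 2 := ⟨g, by rw [← hadef, ← haa]; ring⟩
    have hdb : b' ∣ k := ⟨g, by rw [← hbb]; ring⟩
    have hdc : c' ∣ x ^ 11 := ⟨g, by rw [← hcc]; ring⟩
    have hsub := subset_pf x y k a' b' c' hxz hy0 hk0 hda hdb hdc
    have hn0 : (y * k * x).natAbs ≠ 0 := by
      simp [Int.natAbs_mul, hxz, hy0, hk0]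
    have h7 := rad_le_of_subset hsub hn0
    have h8 : R ≤ ((y * k * x).natAbs : ℝ) := by rw [hRdef]; exact_mod_cast h7
    calc R ≤ ((y * k * x).natAbs : ℝ) := h8
      _ = |(y:ℝ)| * |(k:ℝ)| * u := by
          push_cast [Nat.cast_natAbs]
          rw [← hudef, abs_mul, abs_mul, abs_of_pos hx0]
  have hRle2 : R ≤ 2 * X * u ^ ((13:ℝ)/2) := by
    have h13 : u ^ ((11:ℝ)/2) * u = u ^ ((13:ℝ)/2) := by
      nth_rewrite 2 [← rpow_one u]
      rw [← rpow_add hx0]; norm_num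
    calc R ≤ |(y:ℝ)| * |(k:ℝ)| * u := hRle
      _ ≤ (2 * u ^ ((11:ℝ)/2)) * X * u := by
          apply mul_le_mul_of_nonneg_right _ hx0.le
          exact mul_le_mul hyle hkXr (abs_nonneg _) (mul_nonneg two_pos.le htpos.le)
      _ = 2 * X * (u ^ ((11:ℝ)/2) * u) := by ring
      _ = 2 * X * u ^ ((13:ℝ)/2) := by rw [h13]
  -- abc inequality in real terms
  have hc'pos : 0 < c' := by
    have h6 : 0 < g * c' := by rw [hcc]; positivity
    rcases mul_pos_iff.mp h6 with h | h
    · exact h.2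
    · exact absurd h.1 (by omega)
  have hgX : (g:ℝ) ≤ X := by
    have h7 : g ≤ |k| := Int.le_of_dvd (abs_pos.mpr hk0) ((dvd_abs g k).mpr hgb)
    have h8 : ((g:ℤ):ℝ) ≤ ((|k|:ℤ):ℝ) := Int.cast_le.mpr h7
    calc (g:ℝ) ≤ ((|k|:ℤ):ℝ) := h8
      _ ≤ X := hkX
  have hmain : u ^ (11:ℝ) ≤ X * (C₀ * R ^ (1+ε)) := by
    have hcc' := congrArg (fun z : ℤ => (z:ℝ)) hcc
    push_cast at hcc'
    rw [← hudef] at hcc'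
    have hc'r : (0:ℝ) < (c':ℝ) := by exact_mod_cast hc'pos
    have habs : ((|c'|:ℤ):ℝ) = (c':ℝ) := by rw [abs_of_pos hc'pos]
    rw [habs] at hABC
    calc u ^ (11:ℝ) = (g:ℝ) * (c':ℝ) := by rw [hu11, ← hcc']
      _ ≤ X * (c':ℝ) := mul_le_mul_of_nonneg_right hgX hc'r.le
      _ ≤ X * (C₀ * R ^ (1+ε)) := mul_le_mul_of_nonneg_left hABC hX0.le
  -- combine
  have hexp0 : (0:ℝ) < 1 + ε := by linarith
  have hRpow : R ^ (1+ε) ≤ (2:ℝ)^(1+ε) * X^(1+ε) * u ^ ((13:ℝ)/2 * (1+ε)) := by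
    calc R ^ (1+ε) ≤ (2 * X * u ^ ((13:ℝ)/2)) ^ (1+ε) :=
          rpow_le_rpow hR0 hRle2 hexp0.le
      _ = (2:ℝ)^(1+ε) * X^(1+ε) * (u ^ ((13:ℝ)/2))^(1+ε) := by
          rw [mul_rpow (by positivity) (by positivity), mul_rpow (by norm_num) hX0.le]
      _ = (2:ℝ)^(1+ε) * X^(1+ε) * u ^ ((13:ℝ)/2 * (1+ε)) := by
          rw [← rpow_mul hx0.le]
  obtain ⟨e, hedef⟩ : ∃ e : ℝ, e = 11 - 13/2 * (1+ε) := ⟨_, rfl⟩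
  have he : (23:ℝ)/8 ≤ e := by rw [hedef]; linarith
  have he0 : (0:ℝ) < e := lt_of_lt_of_le (by norm_num) he
  have hue : u ^ e ≤ C₁ * X ^ ((2:ℝ)+ε) := by
    have hup : 0 < u ^ ((13:ℝ)/2 * (1+ε)) := rpow_pos_of_pos hx0 _
    rw [hedef, rpow_sub hx0, div_le_iff₀ hup]
    calc u ^ (11:ℝ) ≤ X * (C₀ * R ^ (1+ε)) := hmain
      _ ≤ X * (C₀ * ((2:ℝ)^(1+ε) * X^(1+ε) * u ^ ((13:ℝ)/2 * (1+ε)))) := by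
          apply mul_le_mul_of_nonneg_left _ hX0.le
          exact mul_le_mul_of_nonneg_left hRpow hC₀.le
      _ = C₁ * (X^(1:ℝ) * X^(1+ε)) * u ^ ((13:ℝ)/2 * (1+ε)) := by
          rw [hC₁def, rpow_one]; ring
      _ = C₁ * X ^ ((2:ℝ)+ε) * u ^ ((13:ℝ)/2 * (1+ε)) := by
          rw [← rpow_add hX0, show (1:ℝ)+(1+ε) = 2+ε by ring]
  -- final bound
  have hexpfin : ((2:ℝ)+ε) / e ≤ (4:ℝ)/9 + η := by
    rw [div_le_iff₀ he0, hedef]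
    have hp : η*ε ≤ η*(1/4) := mul_le_mul_of_nonneg_left hε4 hη.le
    have key : ((4:ℝ)/9 + η) * (11 - 13/2 * (1+ε))
        = 2 - 26*ε/9 + 9*η/2 - 13*(η*ε)/2 := by ring
    rw [key]; linarith [hp, hεη]
  have hfin : u ≤ C₁ ^ ((1:ℝ)/e) * X ^ (((2:ℝ)+ε)/e) := by
    have h8 : (u ^ e) ^ ((1:ℝ)/e) ≤ (C₁ * X ^ ((2:ℝ)+ε)) ^ ((1:ℝ)/e) :=
      rpow_le_rpow (rpow_pos_of_pos hx0 e).le hue (one_div_nonneg.mpr he0.le)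
    rwa [← rpow_mul hx0.le, mul_one_div_cancel he0.ne', rpow_one,
      mul_rpow hC₁.le (by positivity), ← rpow_mul hX0.le,
      mul_one_div] at h8
  have hCbound : C₁ ^ ((1:ℝ)/e) ≤ max C₁ 1 := by
    calc C₁ ^ ((1:ℝ)/e) ≤ (max C₁ 1) ^ ((1:ℝ)/e) :=
          rpow_le_rpow hC₁.le (le_max_left _ _) (one_div_nonneg.mpr he0.le)
      _ ≤ (max C₁ 1) ^ (1:ℝ) := by
          apply rpow_le_rpow_of_exponent_le (le_max_right _ _)
          rw [div_le_one he0]; linarith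
      _ = max C₁ 1 := rpow_one _
  have hXbound : X ^ (((2:ℝ)+ε)/e) ≤ X ^ ((4:ℝ)/9 + η) :=
    rpow_le_rpow_of_exponent_le hX1 hexpfin
  rw [← hudef]
  calc u ≤ C₁ ^ ((1:ℝ)/e) * X ^ (((2:ℝ)+ε)/e) := hfin
    _ ≤ max C₁ 1 * X ^ ((4:ℝ)/9 + η) :=
        mul_le_mul hCbound hXbound (by positivity) (le_trans zero_le_one (le_max_right _ _))
end

section
/- Assume the abc Conjecture. Then for every real η > 0 there exists a constant C > 0 such that the following holds: for all real X ≥ 4 and all integers x ≥ 1 and u, if x > X^(1/11) and 1 ≤ |5·x^22 − u^2| ≤ 4X, then x ≤ C · X^(1/5 + η). -/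
open Real

lemma rad_dvd_rad_of_dvd {m n : ℕ} (h : m ∣ n) (hn : n ≠ 0) : rad m ∣ rad n :=
  Finset.prod_dvd_prod_of_subset _ _ _ (Nat.primeFactors_mono h hn)

/-- If `m ∣ k ^ 24` and `k ≠ 0` then `rad m ≤ k`. -/
lemma rad_le_of_dvd_pow {m k : ℕ} (h : m ∣ k ^ 24) (hk : k ≠ 0) : rad m ≤ k := by
  have h1 : rad m ∣ rad (k ^ 24) := rad_dvd_rad_of_dvd h (pow_ne_zero _ hk)
  have h2 : rad (k ^ 24) = rad k := by unfold rad; rw [Nat.primeFactors_pow k (by norm_num)]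
  have h3 : rad m ∣ k := (h2 ▸ h1).trans (rad_dvd_self k)
  exact Nat.le_of_dvd (Nat.pos_of_ne_zero hk) h3

set_option maxHeartbeats 1600000 in
theorem abc_implies_x_bound_E4 (habc : ABCConjecture) :
    ∀ η : ℝ, 0 < η → ∃ C : ℝ, 0 < C ∧ ∀ X : ℝ, 4 ≤ X → ∀ x u : ℤ, 1 ≤ x →
      X ^ ((1 : ℝ) / 11) < (x : ℝ) →
      1 ≤ |5 * x ^ 22 - u ^ 2| → ((|5 * x ^ 22 - u ^ 2| : ℤ) : ℝ) ≤ 4 * X →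
      (x : ℝ) ≤ C * X ^ ((1 : ℝ) / 5 + η) := by
  intro η hη
  set ε : ℝ := 2 * η / (1 + 3 * η) with hεdef
  have hεpos : 0 < ε := by positivity
  have hεid : ε * (1 + 3 * η) = 2 * η := by
    rw [hεdef]; field_simp
  have hε56 : ε < 5 / 6 := by nlinarith
  have hp : 0 < 10 - 12 * ε := by linarith
  have hexp : (2 + ε) / (10 - 12 * ε) ≤ 1 / 5 + η := by
    rw [div_le_iff₀ hp]; nlinarith
  obtain ⟨C₀, hC₀, habc'⟩ := habc ε hεpos
  have h1ε : (0:ℝ) < 1 + ε := by linarith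
  set C₁ : ℝ := C₀ * 60 ^ (1 + ε) with hC₁def
  have h60 : (0:ℝ) < (60:ℝ) ^ (1 + ε) := Real.rpow_pos_of_pos (by norm_num) _
  have hC₁ : 0 < C₁ := by positivity
  set q : ℝ := 1 / (10 - 12 * ε) with hqdef
  have hq : 0 < q := by positivity
  refine ⟨C₁ ^ q + 1, by positivity, ?_⟩
  intro X hX x u hx hx11 h1 h4X
  have hX1 : (1:ℝ) ≤ X := by linarith
  have hX0 : (0:ℝ) < X := by linarith
  have hxR : (1:ℝ) ≤ (x:ℝ) := by exact_mod_cast hx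
  have hx0 : (0:ℝ) < (x:ℝ) := by linarith
  -- x^22 > X^2 ≥ 4X
  have hx22 : X ^ 2 < ((x:ℝ)) ^ 22 := by
    have h0 : (0:ℝ) ≤ X ^ ((1:ℝ)/11) := Real.rpow_nonneg hX0.le _
    have h2 : (X ^ ((1:ℝ)/11)) ^ (22:ℕ) < ((x:ℝ)) ^ (22:ℕ) :=
      pow_lt_pow_left₀ hx11 h0 (by norm_num)
    calc X ^ 2 = (X ^ ((1:ℝ)/11)) ^ (22:ℕ) := by
          rw [← Real.rpow_natCast (X ^ ((1:ℝ)/11)) 22, ← Real.rpow_mul hX0.le]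
          norm_num
      _ < _ := h2
  have hX4x : 4 * X < ((x:ℝ)) ^ 22 := by nlinarith
  -- abbreviations
  have hc0eq : (5 * x ^ 22 - u ^ 2 : ℤ) = 5 * x ^ 22 - u ^ 2 := rfl
  set A : ℤ := 5 * x ^ 22 with hAdef
  set B : ℤ := u ^ 2 with hBdef
  set c0 : ℤ := A - B with hc0def
  have h1' : (1:ℤ) ≤ |c0| := h1
  have h4X' : ((|c0|:ℤ):ℝ) ≤ 4 * X := h4X
  have hc0ne : c0 ≠ 0 := by intro h; rw [h] at h1'; simp at h1'
  have hApos : (0:ℤ) < A := by positivity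
  have hAne : A ≠ 0 := hApos.ne'
  have hc0R : |(c0:ℝ)| ≤ 4 * X := by
    rw [← Int.cast_abs]; exact_mod_cast h4X'
  have hune : u ≠ 0 := by
    intro h
    have hcA : c0 = A := by rw [hc0def, hBdef, h]; ring
    rw [hcA] at hc0R
    have : |(A:ℝ)| = 5 * ((x:ℝ))^22 := by
      rw [hAdef]; push_cast; rw [abs_of_pos (by positivity)]
    rw [this] at hc0R
    nlinarith
  have hBne : B ≠ 0 := pow_ne_zero _ hune
  -- gcd setup
  set g : ℕ := Int.gcd A B with hgdef
  have hgpos : 0 < g := Int.gcd_pos_of_ne_zero_left _ hAne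
  have hgne : (g:ℤ) ≠ 0 := by exact_mod_cast hgpos.ne'
  obtain ⟨c, hc⟩ : (g:ℤ) ∣ A := Int.gcd_dvd_left A B
  obtain ⟨b, hb⟩ : (g:ℤ) ∣ B := Int.gcd_dvd_right A B
  obtain ⟨a, ha⟩ : (g:ℤ) ∣ c0 := by
    rw [hc0def]; exact dvd_sub (Int.gcd_dvd_left A B) (Int.gcd_dvd_right A B)
  have habcsum : a + b = c := by
    have : (g:ℤ) * (a + b) = (g:ℤ) * c := by rw [mul_add, ← ha, ← hb, ← hc, hc0def]; ring
    exact mul_left_cancel₀ hgne this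
  have hane : a ≠ 0 := by rintro rfl; simp at ha; exact hc0ne ha
  have hbne : b ≠ 0 := by rintro rfl; simp at hb; exact hBne hb
  have hcne : c ≠ 0 := by rintro rfl; simp at hc; exact hAne hc
  -- coprimality
  have hAg : A / (g:ℤ) = c := by rw [hc]; exact Int.mul_ediv_cancel_left _ hgne
  have hBg : B / (g:ℤ) = b := by rw [hb]; exact Int.mul_ediv_cancel_left _ hgne
  have hcb : IsCoprime c b := by
    rw [Int.isCoprime_iff_gcd_eq_one, ← hAg, ← hBg]
    exact Int.gcd_div_gcd_div_gcd hgpos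
  have hab : IsCoprime a b := by
    have h := hcb.add_mul_left_left (-1)
    have heq : c + b * (-1) = a := by rw [← habcsum]; ring
    rwa [heq] at h
  -- apply abc
  have key := habc' a b c hane hbne hcne hab habcsum
  -- bound on radical
  set K : ℤ := c0 * u * (5 * x) with hKdef
  have h5x : (0:ℤ) < 5 * x := by linarith
  have hKne : K ≠ 0 := mul_ne_zero (mul_ne_zero hc0ne hune) h5x.ne'
  have hdvd : (a * b * c).natAbs ∣ K.natAbs ^ 24 := by
    rw [← Int.natAbs_pow, Int.natAbs_dvd_natAbs]
    have hd1 : a * b * c ∣ c0 * B * A :=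
      mul_dvd_mul (mul_dvd_mul (Dvd.intro_left _ ha.symm) (Dvd.intro_left _ hb.symm))
        (Dvd.intro_left _ hc.symm)
    refine hd1.trans ?_
    have hd2 : c0 * B * A ∣ c0 ^ 24 * u ^ 24 * (5 ^ 24 * x ^ 24) := by
      refine mul_dvd_mul (mul_dvd_mul (dvd_pow_self c0 (by norm_num)) ?_) ?_
      · rw [hBdef]; exact pow_dvd_pow u (by norm_num)
      · rw [hAdef]
        exact mul_dvd_mul (dvd_pow_self 5 (by norm_num)) (pow_dvd_pow x (by norm_num))
    refine hd2.trans (dvd_of_eq ?_)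
    rw [hKdef]; ring
  have hradK : rad (a * b * c).natAbs ≤ K.natAbs :=
    rad_le_of_dvd_pow hdvd (Int.natAbs_ne_zero.mpr hKne)
  -- real bound on |u|
  have huR : |(u:ℝ)| ≤ 3 * (x:ℝ) ^ 11 := by
    have hu2 : (u:ℝ)^2 ≤ 5 * (x:ℝ)^22 + 4 * X := by
      have hb1 : (5 * (x:ℝ)^22 - (u:ℝ)^2) = (c0:ℝ) := by
        rw [hc0def, hAdef, hBdef]; push_cast; ring
      linarith [neg_abs_le ((c0:ℝ)), hc0R, hb1]
    have hsq : (u:ℝ)^2 ≤ (3 * (x:ℝ)^11)^2 := by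
      have he : (3 * (x:ℝ)^11)^2 = 9 * (x:ℝ)^22 := by ring
      rw [he]
      linarith [hu2, hX4x, pow_nonneg hx0.le 22]
    exact abs_le_of_sq_le_sq hsq (by positivity)
  -- real bound on radical
  have hradR : (rad ((a*b*c).natAbs) : ℝ) ≤ 60 * X * (x:ℝ)^12 := by
    have hr1 : (rad ((a*b*c).natAbs) : ℝ) ≤ (K.natAbs : ℝ) := by exact_mod_cast hradK
    have hr2 : (K.natAbs : ℝ) = |(c0:ℝ)| * |(u:ℝ)| * (5 * (x:ℝ)) := by
      rw [Nat.cast_natAbs, Int.cast_abs, hKdef]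
      push_cast
      rw [abs_mul, abs_mul, abs_of_pos (by positivity : (0:ℝ) < 5 * (x:ℝ))]
    rw [hr2] at hr1
    have h5xpos : (0:ℝ) ≤ 5 * (x:ℝ) := by positivity
    calc (rad ((a*b*c).natAbs) : ℝ) ≤ |(c0:ℝ)| * |(u:ℝ)| * (5 * (x:ℝ)) := hr1
      _ ≤ (4 * X) * (3 * (x:ℝ)^11) * (5 * (x:ℝ)) := by
          apply mul_le_mul _ le_rfl h5xpos (by positivity)
          exact mul_le_mul hc0R huR (abs_nonneg _) (by positivity)
      _ = 60 * X * (x:ℝ)^12 := by ring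
  -- lower bound on |c|
  have hgle : (g:ℝ) ≤ 4 * X := by
    have : (g:ℤ) ≤ |c0| := Int.le_of_dvd (abs_pos.mpr hc0ne) ((dvd_abs _ _).mpr ⟨a, ha⟩)
    calc (g:ℝ) ≤ ((|c0|:ℤ):ℝ) := by exact_mod_cast this
      _ ≤ 4 * X := h4X'
  have hclow : 5 * (x:ℝ)^22 ≤ 4 * X * ((|c|:ℤ):ℝ) := by
    have hAR : (A:ℝ) = (g:ℝ) * (c:ℝ) := by rw [hc]; push_cast; ring
    have hAR2 : 5 * (x:ℝ)^22 = (g:ℝ) * (c:ℝ) := by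
      rw [← hAR, hAdef]; push_cast; ring
    have hgR : (0:ℝ) < (g:ℝ) := by exact_mod_cast hgpos
    have hcabs : (c:ℝ) ≤ ((|c|:ℤ):ℝ) := by
      push_cast; exact le_abs_self _
    have habspos : (0:ℝ) ≤ ((|c|:ℤ):ℝ) := by positivity
    calc 5 * (x:ℝ)^22 = (g:ℝ) * (c:ℝ) := hAR2
      _ ≤ (g:ℝ) * ((|c|:ℤ):ℝ) := by exact mul_le_mul_of_nonneg_left hcabs hgR.le
      _ ≤ 4 * X * ((|c|:ℤ):ℝ) := mul_le_mul_of_nonneg_right hgle habspos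
  -- combine
  set t : ℝ := (x:ℝ) with htdef
  have ht1 : (1:ℝ) ≤ t := hxR
  have ht0 : (0:ℝ) < t := hx0
  have hrpow : ((rad ((a*b*c).natAbs) : ℝ)) ^ (1+ε) ≤ C₁ / C₀ * X ^ ((1:ℝ)+ε) * t ^ ((12:ℝ)+12*ε) := by
    have hstep : ((rad ((a*b*c).natAbs) : ℝ)) ^ (1+ε) ≤ (60 * X * t^12) ^ (1+ε) :=
      Real.rpow_le_rpow (by positivity) hradR h1ε.le
    refine hstep.trans (le_of_eq ?_)
    rw [Real.mul_rpow (by positivity) (by positivity), Real.mul_rpow (by positivity) hX0.le]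
    have ht12 : (t^(12:ℕ)) ^ ((1:ℝ)+ε) = t ^ ((12:ℝ)+12*ε) := by
      rw [← Real.rpow_natCast t 12, ← Real.rpow_mul ht0.le]
      norm_num; ring_nf
    rw [ht12, hC₁def]
    field_simp
  have hmain : 5 * t^(22:ℕ) ≤ 4 * C₁ * X ^ ((2:ℝ)+ε) * t ^ ((12:ℝ)+12*ε) := by
    have h2 : 5 * t^(22:ℕ) ≤ 4 * X * (C₀ * ((rad ((a*b*c).natAbs) : ℝ)) ^ (1+ε)) := by
      refine hclow.trans ?_
      exact mul_le_mul_of_nonneg_left key (by positivity)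
    have h3 : 4 * X * (C₀ * ((rad ((a*b*c).natAbs) : ℝ)) ^ (1+ε)) ≤
        4 * X * (C₀ * (C₁ / C₀ * X ^ ((1:ℝ)+ε) * t ^ ((12:ℝ)+12*ε))) := by
      refine mul_le_mul_of_nonneg_left (mul_le_mul_of_nonneg_left hrpow hC₀.le) (by positivity)
    refine h2.trans (h3.trans (le_of_eq ?_))
    have hXadd : X * X ^ ((1:ℝ)+ε) = X ^ ((2:ℝ)+ε) := by
      rw [show ((2:ℝ)+ε) = 1 + (1+ε) by ring]
      rw [Real.rpow_add hX0 1 (1+ε), Real.rpow_one]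
    rw [← hXadd]
    field_simp
  have hfin : t ^ ((10:ℝ) - 12*ε) ≤ C₁ * X ^ ((2:ℝ)+ε) := by
    have htpos : (0:ℝ) < t ^ ((12:ℝ)+12*ε) := Real.rpow_pos_of_pos ht0 _
    rw [← mul_le_mul_iff_of_pos_right htpos]
    have hsplit : t ^ ((10:ℝ) - 12*ε) * t ^ ((12:ℝ)+12*ε) = t ^ (22:ℕ) := by
      rw [← Real.rpow_add ht0, ← Real.rpow_natCast t 22]
      norm_num
    rw [hsplit]
    linarith [hmain, mul_nonneg (mul_nonneg hC₁.le (Real.rpow_nonneg hX0.le ((2:ℝ)+ε))) (Real.rpow_nonneg ht0.le ((12:ℝ)+12*ε))]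
  -- raise to power q
  have hq1 : ((10:ℝ) - 12*ε) * q = 1 := by
    rw [hqdef]; field_simp
  have hfinal : t ≤ (C₁ * X ^ ((2:ℝ)+ε)) ^ q := by
    have := Real.rpow_le_rpow (Real.rpow_nonneg ht0.le _) hfin hq.le
    rwa [← Real.rpow_mul ht0.le, hq1, Real.rpow_one] at this
  have hrhs : (C₁ * X ^ ((2:ℝ)+ε)) ^ q ≤ C₁ ^ q * X ^ ((1:ℝ)/5 + η) := by
    rw [Real.mul_rpow hC₁.le (Real.rpow_nonneg hX0.le _), ← Real.rpow_mul hX0.le]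
    refine mul_le_mul_of_nonneg_left ?_ (Real.rpow_nonneg hC₁.le _)
    refine Real.rpow_le_rpow_of_exponent_le hX1 ?_
    rw [hqdef]
    calc (2+ε) * (1/(10-12*ε)) = (2+ε)/(10-12*ε) := by ring
      _ ≤ 1/5 + η := hexp
  have hXp : (0:ℝ) < X ^ ((1:ℝ)/5 + η) := Real.rpow_pos_of_pos hX0 _
  calc (x:ℝ) = t := rfl
    _ ≤ C₁ ^ q * X ^ ((1:ℝ)/5 + η) := hfinal.trans hrhs
    _ ≤ (C₁ ^ q + 1) * X ^ ((1:ℝ)/5 + η) := by nlinarith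
end

section
/- There exists a constant C > 0 such that for all real X ≥ 2, the number of pairs (x, u) of integers with 1 ≤ x ≤ X^(1/11), and 1 ≤ |5·x^22 − u^2| ≤ 4X is at most C · X^(6/11). -/
open Real

private lemma sqrt_sub_sqrt_le' {A B : ℝ} (hB : 0 ≤ B) (hBA : B ≤ A) (hA : 0 < A) :
    Real.sqrt A - Real.sqrt B ≤ (A - B) / Real.sqrt A := by
  rw [le_div_iff₀ (Real.sqrt_pos.mpr hA)]
  have h1 : Real.sqrt A * Real.sqrt A = A := Real.mul_self_sqrt hA.le
  have h2 : Real.sqrt B * Real.sqrt B = B := Real.mul_self_sqrt hB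
  have h3 : Real.sqrt B ≤ Real.sqrt A := Real.sqrt_le_sqrt hBA
  nlinarith [Real.sqrt_nonneg B, Real.sqrt_nonneg A]

private lemma sum_inv_sq_le' (s : ℤ) (hs : 2 ≤ s) :
    ∀ M : ℤ, ∑ x ∈ Finset.Icc s M, (1 / (x : ℝ) ^ 2) ≤ 1 / ((s : ℝ) - 1) := by
  have hs1 : (0:ℝ) < (s:ℝ) - 1 := by
    have : (2:ℝ) ≤ (s:ℝ) := by exact_mod_cast hs
    linarith
  have key : ∀ M : ℤ, s ≤ M →
      ∑ x ∈ Finset.Icc s M, (1 / (x : ℝ) ^ 2) ≤ 1 / ((s : ℝ) - 1) - 1 / (M : ℝ) := by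
    refine Int.le_induction ?_ ?_
    · rw [Finset.Icc_self, Finset.sum_singleton]
      have hsR : (2:ℝ) ≤ (s:ℝ) := by exact_mod_cast hs
      rw [div_sub_div _ _ (by linarith) (by linarith)]
      rw [div_le_div_iff₀ (by positivity) (by nlinarith)]
      ring_nf
      nlinarith
    · intro M hM ih'
      have hins : Finset.Icc s (M + 1) = insert (M + 1) (Finset.Icc s M) := by
        ext y; simp only [Finset.mem_Icc, Finset.mem_insert]; omega
      rw [hins, Finset.sum_insert (by simp only [Finset.mem_Icc]; omega)]
      have hMR : (2:ℝ) ≤ (M:ℝ) := by exact_mod_cast hs.trans hM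
      have h1 : 1 / ((M:ℝ) + 1) ^ 2 ≤ 1 / (M:ℝ) - 1 / ((M:ℝ) + 1) := by
        rw [div_sub_div _ _ (by linarith) (by linarith)]
        rw [div_le_div_iff₀ (by positivity) (by nlinarith)]
        nlinarith
      push_cast
      push_cast at ih'
      linarith
  intro M
  rcases le_or_gt s M with h | h
  · have := key M h
    have hM0 : (0:ℝ) < (M:ℝ) := by
      have : (2:ℝ) ≤ (M:ℝ) := by exact_mod_cast hs.trans h
      linarith
    have : 1 / (M:ℝ) > 0 := by positivity
    linarith [key M h]
  · rw [Finset.Icc_eq_empty (by omega), Finset.sum_empty]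
    positivity

set_option maxHeartbeats 1000000 in
theorem small_x_pairs_bound_E4 :
    ∃ C : ℝ, 0 < C ∧ ∀ X : ℝ, 2 ≤ X →
      (Set.ncard {p : ℤ × ℤ | 1 ≤ p.1 ∧ (p.1 : ℝ) ≤ X ^ ((1 : ℝ) / 11) ∧
          1 ≤ |5 * p.1 ^ 22 - p.2 ^ 2| ∧ ((|5 * p.1 ^ 22 - p.2 ^ 2| : ℤ) : ℝ) ≤ 4 * X} : ℝ)
        ≤ C * X ^ ((6 : ℝ) / 11) := by
  refine ⟨44, by norm_num, fun X hX => ?_⟩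
  have hX0 : (0:ℝ) < X := by linarith
  have hX1 : (1:ℝ) ≤ X := by linarith
  set M : ℤ := ⌊X ^ ((1:ℝ)/11)⌋ with hMdef
  set x0 : ℝ := X ^ ((1:ℝ)/22) with hx0def
  have hx0_one : 1 ≤ x0 := Real.one_le_rpow hX1 (by norm_num)
  have hx0_pos : 0 < x0 := by linarith
  set s : ℤ := ⌊x0⌋ + 1 with hsdef
  have hfs : (1:ℤ) ≤ ⌊x0⌋ := by
    rw [Int.le_floor]; exact_mod_cast hx0_one
  have hs2 : (2:ℤ) ≤ s := by omega
  -- defs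
  set A : ℤ → ℝ := fun x => 5 * (x:ℝ) ^ 22 + 4 * X with hAdef
  set B : ℤ → ℝ := fun x => max 0 (5 * (x:ℝ) ^ 22 - 4 * X) with hBdef
  have hApos : ∀ x : ℤ, 0 < A x := fun x => by
    have : (0:ℝ) ≤ (x:ℝ)^22 := by positivity
    simp only [hAdef]; nlinarith
  have hBA : ∀ x : ℤ, B x ≤ A x := fun x => by
    simp only [hAdef, hBdef, max_le_iff]
    constructor <;> nlinarith [sq_nonneg ((x:ℝ)^11), hApos x]
  set K : ℤ → ℤ := fun x => ⌊Real.sqrt (A x)⌋ with hKdef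
  set L : ℤ → ℤ := fun x => ⌈Real.sqrt (B x)⌉ with hLdef
  set F : ℤ → Finset ℤ := fun x =>
    Finset.Icc (L x) (K x) ∪ Finset.Icc (-(K x)) (-(L x)) with hFdef
  set T : Finset (ℤ × ℤ) := (Finset.Icc 1 M).biUnion (fun x => {x} ×ˢ F x) with hTdef
  -- inclusion
  have hsub : {p : ℤ × ℤ | 1 ≤ p.1 ∧ (p.1 : ℝ) ≤ X ^ ((1 : ℝ) / 11) ∧
      1 ≤ |5 * p.1 ^ 22 - p.2 ^ 2| ∧ ((|5 * p.1 ^ 22 - p.2 ^ 2| : ℤ) : ℝ) ≤ 4 * X} ⊆ ↑T := by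
    rintro ⟨x, u⟩ ⟨h1, h2, _h3, h4⟩
    rw [Finset.mem_coe, hTdef, Finset.mem_biUnion]
    refine ⟨x, Finset.mem_Icc.mpr ⟨h1, Int.le_floor.mpr h2⟩, ?_⟩
    rw [Finset.mem_product]
    refine ⟨Finset.mem_singleton_self x, ?_⟩
    push_cast at h4
    rw [abs_le] at h4
    have hu2A : (u:ℝ)^2 ≤ A x := by simp only [hAdef]; nlinarith [h4.1]
    have hu2B : B x ≤ (u:ℝ)^2 := by
      simp only [hBdef, max_le_iff]
      exact ⟨sq_nonneg _, by nlinarith [h4.2]⟩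
    have habsK : |u| ≤ K x := by
      rw [hKdef, Int.le_floor]
      push_cast
      exact Real.abs_le_sqrt hu2A
    have habsL : L x ≤ |u| := by
      rw [hLdef, Int.ceil_le]
      push_cast
      calc Real.sqrt (B x) ≤ Real.sqrt ((u:ℝ)^2) := Real.sqrt_le_sqrt hu2B
        _ = |(u:ℝ)| := Real.sqrt_sq_eq_abs _
    simp only [hFdef, Finset.mem_union, Finset.mem_Icc]
    rcases le_or_gt 0 u with hu | hu
    · left; rw [abs_of_nonneg hu] at habsK habsL; exact ⟨habsL, habsK⟩
    · right; rw [abs_of_neg hu] at habsK habsL; omega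
  -- ncard ≤ card T
  have hcard1 : (Set.ncard {p : ℤ × ℤ | 1 ≤ p.1 ∧ (p.1 : ℝ) ≤ X ^ ((1 : ℝ) / 11) ∧
      1 ≤ |5 * p.1 ^ 22 - p.2 ^ 2| ∧ ((|5 * p.1 ^ 22 - p.2 ^ 2| : ℤ) : ℝ) ≤ 4 * X} : ℝ)
      ≤ (T.card : ℝ) := by
    have := Set.ncard_le_ncard hsub T.finite_toSet
    rw [Set.ncard_coe_finset] at this
    exact_mod_cast this
  -- per-fiber bound
  have hfiber : ∀ x ∈ Finset.Icc (1:ℤ) M, ((F x).card : ℝ) ≤ 16 * X / Real.sqrt (A x) + 2 := by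
    intro x _
    have hcard : (F x).card ≤ 2 * (K x + 1 - L x).toNat := by
      calc (F x).card ≤ (Finset.Icc (L x) (K x)).card
            + (Finset.Icc (-(K x)) (-(L x))).card := Finset.card_union_le _ _
        _ = 2 * (K x + 1 - L x).toNat := by
            rw [Int.card_Icc, Int.card_Icc]
            congr 1
            omega
    have hKL : ((K x : ℝ) + 1 - L x) ≤ Real.sqrt (A x) - Real.sqrt (B x) + 1 := by
      have h1 : (K x : ℝ) ≤ Real.sqrt (A x) := Int.floor_le _
      have h2 : Real.sqrt (B x) ≤ (L x : ℝ) := Int.le_ceil _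
      linarith
    have htoNat : (((K x + 1 - L x).toNat : ℝ)) ≤ Real.sqrt (A x) - Real.sqrt (B x) + 1 := by
      have hnn : 0 ≤ Real.sqrt (A x) - Real.sqrt (B x) + 1 := by
        have := Real.sqrt_le_sqrt (hBA x)
        linarith
      rcases le_or_gt (K x + 1 - L x) 0 with h | h
      · rw [Int.toNat_of_nonpos h]; simpa using hnn
      · have hz : ((K x + 1 - L x).toNat : ℤ) = K x + 1 - L x := Int.toNat_of_nonneg h.le
        have hz' : (((K x + 1 - L x).toNat : ℕ) : ℝ) = ((K x : ℝ) + 1 - (L x : ℝ)) := by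
          exact_mod_cast congrArg (fun z : ℤ => (z : ℝ)) hz
        rw [hz']
        linarith
    have hdiff : Real.sqrt (A x) - Real.sqrt (B x) ≤ 8 * X / Real.sqrt (A x) := by
      have hB0 : 0 ≤ B x := le_max_left _ _
      have h := sqrt_sub_sqrt_le' hB0 (hBA x) (hApos x)
      have hAB8 : A x - B x ≤ 8 * X := by
        simp only [hAdef, hBdef]
        rcases le_or_gt (5 * (x:ℝ)^22 - 4*X) 0 with hc | hc
        · rw [max_eq_left hc]; nlinarith
        · rw [max_eq_right hc.le]; linarith
      calc Real.sqrt (A x) - Real.sqrt (B x) ≤ (A x - B x) / Real.sqrt (A x) := h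
        _ ≤ 8 * X / Real.sqrt (A x) := by
            have hsA : 0 < Real.sqrt (A x) := Real.sqrt_pos.mpr (hApos x)
            exact (div_le_div_iff_of_pos_right hsA).mpr hAB8
    calc ((F x).card : ℝ) ≤ 2 * (((K x + 1 - L x).toNat : ℝ)) := by exact_mod_cast hcard
      _ ≤ 2 * (Real.sqrt (A x) - Real.sqrt (B x) + 1) := by linarith
      _ ≤ 16 * X / Real.sqrt (A x) + 2 := by
          rw [show (16:ℝ) * X / Real.sqrt (A x) = 2 * (8 * X / Real.sqrt (A x)) by ring]
          linarith
  -- counting the interval of x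
  have hM1 : (1:ℤ) ≤ M := by
    rw [hMdef, Int.le_floor]
    exact_mod_cast Real.one_le_rpow hX1 (by norm_num)
  have hcardIcc : ((Finset.Icc (1:ℤ) M).card : ℝ) ≤ X ^ ((1:ℝ)/11) := by
    rw [Int.card_Icc]
    have h1 : ((M + 1 - 1).toNat : ℤ) = M := by omega
    have h2 : (((M + 1 - 1).toNat : ℕ) : ℝ) = (M : ℝ) := by exact_mod_cast congrArg (fun z : ℤ => (z : ℝ)) h1
    rw [h2]
    exact Int.floor_le _ |>.trans_eq rfl
  -- T.card bounded by sum of fiber cards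
  have hT2 : (T.card : ℝ) ≤ ∑ x ∈ Finset.Icc (1:ℤ) M, ((F x).card : ℝ) := by
    have h := Finset.card_biUnion_le (s := Finset.Icc (1:ℤ) M) (t := fun x => {x} ×ˢ F x)
    have h2 : ∀ x : ℤ, ({x} ×ˢ F x).card = (F x).card := by
      intro x; rw [Finset.card_product, Finset.card_singleton, one_mul]
    rw [← hTdef] at h
    calc (T.card : ℝ) ≤ ((∑ x ∈ Finset.Icc (1:ℤ) M, ({x} ×ˢ F x).card : ℕ) : ℝ) := by
          exact_mod_cast h
      _ = ∑ x ∈ Finset.Icc (1:ℤ) M, ((F x).card : ℝ) := by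
          push_cast; exact Finset.sum_congr rfl (fun x _ => by exact_mod_cast h2 x)
  set g : ℤ → ℝ := fun x => 16 * X / Real.sqrt (A x) with hgdef
  have hgnn : ∀ x : ℤ, 0 ≤ g x := fun x => by
    have := (hApos x).le
    simp only [hgdef]
    positivity
  have hstep : (T.card : ℝ) ≤ (∑ x ∈ Finset.Icc (1:ℤ) M, g x) + 2 * X ^ ((1:ℝ)/11) := by
    calc (T.card : ℝ) ≤ ∑ x ∈ Finset.Icc (1:ℤ) M, ((F x).card : ℝ) := hT2
      _ ≤ ∑ x ∈ Finset.Icc (1:ℤ) M, (g x + 2) := Finset.sum_le_sum hfiber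
      _ = (∑ x ∈ Finset.Icc (1:ℤ) M, g x) + ((Finset.Icc (1:ℤ) M).card : ℝ) * 2 := by
          rw [Finset.sum_add_distrib, Finset.sum_const, nsmul_eq_mul]
      _ ≤ (∑ x ∈ Finset.Icc (1:ℤ) M, g x) + 2 * X ^ ((1:ℝ)/11) := by
          linarith [hcardIcc]
  -- split the sum
  have hsplit : ∑ x ∈ Finset.Icc (1:ℤ) M, g x ≤
      (∑ x ∈ Finset.Icc (1:ℤ) (s-1), g x) + ∑ x ∈ Finset.Icc s M, g x := by
    have hsub2 : Finset.Icc (1:ℤ) M ⊆ Finset.Icc 1 (s-1) ∪ Finset.Icc s M := by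
      intro y hy
      simp only [Finset.mem_Icc, Finset.mem_union] at *
      omega
    have hdisj : Disjoint (Finset.Icc (1:ℤ) (s-1)) (Finset.Icc s M) := by
      rw [Finset.disjoint_left]
      intro y h1 h2
      simp only [Finset.mem_Icc] at *
      omega
    calc ∑ x ∈ Finset.Icc (1:ℤ) M, g x
        ≤ ∑ x ∈ Finset.Icc (1:ℤ) (s-1) ∪ Finset.Icc s M, g x :=
          Finset.sum_le_sum_of_subset_of_nonneg hsub2 (fun x _ _ => hgnn x)
      _ = _ := Finset.sum_union hdisj
  have hsX : 0 < Real.sqrt X := Real.sqrt_pos.mpr hX0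
  have hsqX : Real.sqrt X * Real.sqrt X = X := Real.mul_self_sqrt hX0.le
  -- head bound
  have hhead : ∑ x ∈ Finset.Icc (1:ℤ) (s-1), g x ≤ 8 * X ^ ((6:ℝ)/11) := by
    have hterm : ∀ x ∈ Finset.Icc (1:ℤ) (s-1), g x ≤ 8 * Real.sqrt X := by
      intro x _
      have h4A : 4 * X ≤ A x := by
        have : (0:ℝ) ≤ (x:ℝ)^22 := by positivity
        simp only [hAdef]; nlinarith
      have h2s : 2 * Real.sqrt X ≤ Real.sqrt (A x) := by
        have h1 : Real.sqrt (4 * X) ≤ Real.sqrt (A x) := Real.sqrt_le_sqrt h4A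
        have h2 : Real.sqrt (4 * X) = 2 * Real.sqrt X := by
          rw [show (4:ℝ) * X = 2^2 * X by norm_num, Real.sqrt_mul (by positivity) X,
            Real.sqrt_sq (by norm_num : (0:ℝ) ≤ 2)]
        linarith
      have heq : 16 * X / (2 * Real.sqrt X) = 8 * Real.sqrt X := by
        rw [div_eq_iff (by positivity)]; nlinarith
      calc g x ≤ 16 * X / (2 * Real.sqrt X) := by
            simp only [hgdef]
            exact div_le_div_of_nonneg_left (by positivity) (by positivity) h2s
        _ = 8 * Real.sqrt X := heq
    have hcard2 : ((Finset.Icc (1:ℤ) (s-1)).card : ℝ) ≤ x0 := by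
      rw [Int.card_Icc]
      have h1 : ((s - 1 + 1 - 1).toNat : ℤ) = ⌊x0⌋ := by omega
      have h2 : (((s - 1 + 1 - 1).toNat : ℕ) : ℝ) = ((⌊x0⌋ : ℤ) : ℝ) := by
        exact_mod_cast congrArg (fun z : ℤ => (z : ℝ)) h1
      rw [h2]
      exact Int.floor_le _
    have h8 : 0 ≤ 8 * Real.sqrt X := by positivity
    calc ∑ x ∈ Finset.Icc (1:ℤ) (s-1), g x
        ≤ ((Finset.Icc (1:ℤ) (s-1)).card : ℝ) * (8 * Real.sqrt X) := by
          have := Finset.sum_le_card_nsmul _ _ _ hterm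
          simpa [nsmul_eq_mul] using this
      _ ≤ x0 * (8 * Real.sqrt X) := by nlinarith
      _ = 8 * X ^ ((6:ℝ)/11) := by
          have hk : x0 * Real.sqrt X = X ^ ((6:ℝ)/11) := by
            rw [hx0def, Real.sqrt_eq_rpow, ← Real.rpow_add hX0]
            norm_num
          rw [← hk]; ring
  -- tail bound
  have htail : ∑ x ∈ Finset.Icc s M, g x ≤ 32 * X ^ ((6:ℝ)/11) := by
    have hterm : ∀ x ∈ Finset.Icc s M, g x ≤ (16 * X / x0 ^ 9) * (1 / (x:ℝ)^2) := by
      intro x hx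
      rw [Finset.mem_Icc] at hx
      have hxx0 : x0 ≤ (x:ℝ) := by
        have h1 : x0 < (⌊x0⌋ : ℝ) + 1 := Int.lt_floor_add_one x0
        have h2 : ((s:ℤ) : ℝ) ≤ (x:ℝ) := by exact_mod_cast hx.1
        push_cast [hsdef] at h2
        linarith
      have hxpos : (0:ℝ) < (x:ℝ) := lt_of_lt_of_le hx0_pos hxx0
      have h11 : ((x:ℝ)^11) ≤ Real.sqrt (A x) := by
        have h1 : Real.sqrt ((x:ℝ)^22) ≤ Real.sqrt (A x) := by
          apply Real.sqrt_le_sqrt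
          simp only [hAdef]
          nlinarith [pow_pos hxpos 22]
        have h2 : Real.sqrt ((x:ℝ)^22) = (x:ℝ)^11 := by
          rw [show ((x:ℝ)^22) = ((x:ℝ)^11)^2 by ring, Real.sqrt_sq (by positivity)]
        linarith
      have h911 : x0^9 * (x:ℝ)^2 ≤ (x:ℝ)^11 := by
        have h1 : x0^9 ≤ (x:ℝ)^9 := pow_le_pow_left₀ hx0_pos.le hxx0 9
        have h2 : (0:ℝ) ≤ (x:ℝ)^2 := by positivity
        nlinarith
      have hpos911 : (0:ℝ) < x0^9 * (x:ℝ)^2 := by positivity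
      calc g x ≤ 16 * X / (x0^9 * (x:ℝ)^2) := by
            simp only [hgdef]
            exact div_le_div_of_nonneg_left (by positivity) hpos911 (h911.trans h11)
        _ = (16 * X / x0 ^ 9) * (1 / (x:ℝ)^2) := by
            field_simp
    have hsum2 := sum_inv_sq_le' s hs2 M
    have hcoef : (0:ℝ) ≤ 16 * X / x0 ^ 9 := by positivity
    have hs1r : 1 / ((s:ℝ) - 1) ≤ 2 / x0 := by
      have hfloor : ((s:ℝ) - 1) = ((⌊x0⌋ : ℤ) : ℝ) := by push_cast [hsdef]; ring
      have hge : x0 / 2 ≤ ((⌊x0⌋ : ℤ) : ℝ) := by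
        rcases le_or_gt 2 x0 with h | h
        · have := Int.sub_one_lt_floor x0
          linarith
        · have : (1:ℝ) ≤ ((⌊x0⌋ : ℤ) : ℝ) := by exact_mod_cast hfs
          linarith
      rw [hfloor]
      have hpos : (0:ℝ) < x0 / 2 := by linarith
      calc 1 / ((⌊x0⌋ : ℤ) : ℝ) ≤ 1 / (x0 / 2) := by
            apply one_div_le_one_div_of_le hpos hge
        _ = 2 / x0 := by field_simp
    have hx0_10 : x0 ^ (10:ℕ) = X ^ ((10:ℝ)/22) := by
      rw [hx0def, ← Real.rpow_natCast (X ^ ((1:ℝ)/22)) 10, ← Real.rpow_mul hX0.le]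
      norm_num
    calc ∑ x ∈ Finset.Icc s M, g x
        ≤ ∑ x ∈ Finset.Icc s M, (16 * X / x0 ^ 9) * (1 / (x:ℝ)^2) := Finset.sum_le_sum hterm
      _ = (16 * X / x0 ^ 9) * ∑ x ∈ Finset.Icc s M, (1 / (x:ℝ)^2) := by
          rw [Finset.mul_sum]
      _ ≤ (16 * X / x0 ^ 9) * (2 / x0) := by
          apply mul_le_mul_of_nonneg_left (hsum2.trans hs1r) hcoef
      _ = 32 * X / x0 ^ (10:ℕ) := by
          field_simp
          ring
      _ = 32 * X ^ ((6:ℝ)/11) := by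
          have hk : X / X ^ ((10:ℝ)/22) = X ^ ((6:ℝ)/11) := by
            rw [show X / X ^ ((10:ℝ)/22) = X ^ ((1:ℝ)) / X ^ ((10:ℝ)/22) by rw [Real.rpow_one],
              ← Real.rpow_sub hX0]
            norm_num
          rw [hx0_10, mul_div_assoc, hk]
  -- finish
  have hpow : X ^ ((1:ℝ)/11) ≤ X ^ ((6:ℝ)/11) :=
    Real.rpow_le_rpow_of_exponent_le hX1 (by norm_num)
  calc (Set.ncard {p : ℤ × ℤ | 1 ≤ p.1 ∧ (p.1 : ℝ) ≤ X ^ ((1 : ℝ) / 11) ∧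
          1 ≤ |5 * p.1 ^ 22 - p.2 ^ 2| ∧ ((|5 * p.1 ^ 22 - p.2 ^ 2| : ℤ) : ℝ) ≤ 4 * X} : ℝ)
      ≤ (T.card : ℝ) := hcard1
    _ ≤ (∑ x ∈ Finset.Icc (1:ℤ) M, g x) + 2 * X ^ ((1:ℝ)/11) := hstep
    _ ≤ (8 * X ^ ((6:ℝ)/11) + 32 * X ^ ((6:ℝ)/11)) + 2 * X ^ ((6:ℝ)/11) := by
        have := hsplit
        have := hhead
        have := htail
        linarith
    _ ≤ 44 * X ^ ((6:ℝ)/11) := by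
        have : (0:ℝ) ≤ X ^ ((6:ℝ)/11) := Real.rpow_nonneg hX0.le _
        linarith
end
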